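/- arXiv:2410.07870 — 9 statements merged into one kernel-verified Lean document; each statement's English description precedes it below -/
import Mathlib

section
/- Let a_1, ..., a_N be vectors in R^d and let 1 ≤ K ≤ N. Let B(K,N) denote the set of subsets of {1,...,N} of cardinality K. Then ‖∑_{i=1}^N a_i‖² = (N/K) · (1/binom(N,K)) · ∑_{B ∈ B(K,N)} ‖∑_{i∈B} a_i‖² + 2·((N−K)/(N−1)) · ∑_{1≤i<j≤N} ⟨a_i, a_j⟩. -/
open Finset RealInnerProductSpace

lemma card_pc_filter {α : Type*} [DecidableEq α] (s t : Finset α) (K : ℕ)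
    (hts : t ⊆ s) (htK : t.card ≤ K) :
    ((powersetCard K s).filter (fun B => t ⊆ B)).card
      = (s.card - t.card).choose (K - t.card) := by
  rw [← card_sdiff_of_subset hts, ← card_powersetCard]
  apply Finset.card_bij (fun B _ => B \ t)
  · intro B hB
    simp only [mem_filter, mem_powersetCard] at hB
    obtain ⟨⟨hBs, hBc⟩, htB⟩ := hB
    rw [mem_powersetCard]
    exact ⟨sdiff_subset_sdiff hBs (Finset.Subset.refl t), by rw [card_sdiff_of_subset htB, hBc]⟩
  · intro B hB B' hB' h
    simp only [mem_filter, mem_powersetCard] at hB hB'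
    have h2 : B \ t ∪ t = B' \ t ∪ t := by rw [h]
    rwa [sdiff_union_of_subset hB.2, sdiff_union_of_subset hB'.2] at h2
  · intro C hC
    rw [mem_powersetCard] at hC
    have hdisj : Disjoint C t := Disjoint.mono_left hC.1 sdiff_disjoint
    refine ⟨C ∪ t, ?_, ?_⟩
    · simp only [mem_filter, mem_powersetCard]
      refine ⟨⟨union_subset (hC.1.trans sdiff_subset) hts, ?_⟩, subset_union_right⟩
      rw [card_union_of_disjoint hdisj, hC.2, Nat.sub_add_cancel htK]
    · rw [union_sdiff_right, sdiff_eq_self_of_disjoint hdisj]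

lemma double_sum_split {ι : Type*} [LinearOrder ι] (s : Finset ι) (f : ι → ι → ℝ)
    (hsym : ∀ i j, f i j = f j i) :
    ∑ i ∈ s, ∑ j ∈ s, f i j
      = ∑ i ∈ s, f i i + 2 * ∑ i ∈ s, ∑ j ∈ s.filter (fun j => i < j), f i j := by
  have h1 : ∀ i ∈ s, ∑ j ∈ s, f i j
      = f i i + ∑ j ∈ s.filter (fun j => i < j), f i j
        + ∑ j ∈ s.filter (fun j => j < i), f i j := by
    intro i hi
    rw [← Finset.sum_filter_add_sum_filter_not s (fun j => i < j)]
    have e1 : s.filter (fun j => ¬ i < j)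
        = s.filter (fun j => j < i) ∪ s.filter (fun j => j = i) := by
      ext x; simp only [mem_filter, mem_union]
      constructor
      · rintro ⟨hx, hlt⟩
        rcases lt_or_eq_of_le (le_of_not_gt hlt) with h | h
        · exact Or.inl ⟨hx, h⟩
        · exact Or.inr ⟨hx, h⟩
      · rintro (⟨hx, h⟩ | ⟨hx, h⟩)
        · exact ⟨hx, not_lt_of_gt h⟩
        · exact ⟨hx, by simp [h]⟩
    have e2 : s.filter (fun j => j = i) = {i} := by
      ext x; simp only [mem_filter, mem_singleton]
      exact ⟨fun h => h.2, fun h => ⟨h ▸ hi, h⟩⟩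
    have hd : Disjoint (s.filter (fun j => j < i)) (s.filter (fun j => j = i)) := by
      rw [e2]; simp [Finset.disjoint_singleton_right]
    rw [e1, Finset.sum_union hd, e2, Finset.sum_singleton]
    ring
  rw [Finset.sum_congr rfl h1, Finset.sum_add_distrib, Finset.sum_add_distrib]
  have h2 : ∑ i ∈ s, ∑ j ∈ s.filter (fun j => j < i), f i j
      = ∑ i ∈ s, ∑ j ∈ s.filter (fun j => i < j), f i j := by
    rw [Finset.sum_comm' (t' := s) (s' := fun j => s.filter (fun i => j < i))]
    · exact Finset.sum_congr rfl fun i _ => Finset.sum_congr rfl fun j _ => (hsym i j).symm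
    · intro x y; simp only [mem_filter]; tauto
  rw [h2]; ring

lemma norm_sum_sq_eq {V : Type*} [NormedAddCommGroup V] [InnerProductSpace ℝ V]
    {ι : Type*} [LinearOrder ι] (s : Finset ι) (a : ι → V) :
    ‖∑ i ∈ s, a i‖ ^ 2 = ∑ i ∈ s, ‖a i‖ ^ 2
      + 2 * ∑ i ∈ s, ∑ j ∈ s.filter (fun j => i < j), ⟪a i, a j⟫ := by
  have h : (‖∑ i ∈ s, a i‖ : ℝ) ^ 2 = ⟪∑ i ∈ s, a i, ∑ j ∈ s, a j⟫ :=
    (real_inner_self_eq_norm_sq _).symm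
  rw [h, sum_inner]
  simp_rw [inner_sum]
  rw [double_sum_split s (fun i j => ⟪a i, a j⟫) (fun i j => real_inner_comm _ _)]
  simp [real_inner_self_eq_norm_sq]

lemma sum_batches_single {N K : ℕ} (hN : 1 ≤ N) (hK1 : 1 ≤ K) (g : Fin N → ℝ) :
    ∑ B ∈ powersetCard K (univ : Finset (Fin N)), ∑ i ∈ B, g i
      = ((N - 1).choose (K - 1) : ℝ) * ∑ i, g i := by
  have h1 : ∀ B ∈ powersetCard K (univ : Finset (Fin N)),
      ∑ i ∈ B, g i = ∑ i : Fin N, if i ∈ B then g i else 0 := by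
    intro B _
    rw [Finset.sum_ite_mem, univ_inter]
  rw [Finset.sum_congr rfl h1, Finset.sum_comm]
  have h2 : ∀ i : Fin N,
      ∑ B ∈ powersetCard K (univ : Finset (Fin N)), (if i ∈ B then g i else 0)
        = ((N - 1).choose (K - 1) : ℝ) * g i := by
    intro i
    rw [← Finset.sum_filter, Finset.sum_const, nsmul_eq_mul]
    congr 1
    have hpred : (powersetCard K (univ : Finset (Fin N))).filter (fun B => i ∈ B)
        = (powersetCard K (univ : Finset (Fin N))).filter (fun B => {i} ⊆ B) := by
      simp [singleton_subset_iff]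
    rw [hpred, card_pc_filter _ _ _ (by simp) (by simpa using hK1)]
    simp [card_univ]
  rw [Finset.sum_congr rfl (fun i _ => h2 i), ← Finset.mul_sum]

lemma sum_batches_pair {N K : ℕ} (f : Fin N → Fin N → ℝ) (m : ℕ)
    (hm : ∀ i j : Fin N, i < j →
      ((powersetCard K (univ : Finset (Fin N))).filter (fun B => i ∈ B ∧ j ∈ B)).card = m) :
    ∑ B ∈ powersetCard K (univ : Finset (Fin N)), ∑ i ∈ B,
        ∑ j ∈ B.filter (fun j => i < j), f i j
      = (m : ℝ) * ∑ i : Fin N, ∑ j ∈ univ.filter (fun j => i < j), f i j := by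
  have h1 : ∀ B ∈ powersetCard K (univ : Finset (Fin N)),
      ∑ i ∈ B, ∑ j ∈ B.filter (fun j => i < j), f i j
        = ∑ i : Fin N, ∑ j ∈ univ.filter (fun j => i < j),
            if i ∈ B ∧ j ∈ B then f i j else 0 := by
    intro B _
    have hinner : ∀ i : Fin N, ∑ j ∈ B.filter (fun j => i < j), f i j
        = ∑ j ∈ univ.filter (fun j => i < j), if j ∈ B then f i j else 0 := by
      intro i
      rw [← Finset.sum_filter]
      congr 1
      ext x
      simp only [mem_filter, mem_univ, true_and]
      tauto
    calc ∑ i ∈ B, ∑ j ∈ B.filter (fun j => i < j), f i j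
        = ∑ i : Fin N, if i ∈ B then ∑ j ∈ B.filter (fun j => i < j), f i j else 0 := by
          rw [Finset.sum_ite_mem, univ_inter]
      _ = ∑ i : Fin N, ∑ j ∈ univ.filter (fun j => i < j),
            if i ∈ B ∧ j ∈ B then f i j else 0 := by
          refine Finset.sum_congr rfl fun i _ => ?_
          by_cases hi : i ∈ B
          · rw [if_pos hi, hinner i]
            exact Finset.sum_congr rfl fun j _ => by simp [hi]
          · simp [hi]
  rw [Finset.sum_congr rfl h1, Finset.sum_comm]
  rw [Finset.mul_sum]
  refine Finset.sum_congr rfl fun i _ => ?_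
  rw [Finset.sum_comm, Finset.mul_sum]
  refine Finset.sum_congr rfl fun j hj => ?_
  rw [← Finset.sum_filter, Finset.sum_const, nsmul_eq_mul]
  rw [hm i j (by simpa using hj)]

/-- Lemma: decomposition of the squared norm of a sum of vectors into the average
squared norm of batch sums of size `K` plus the pairwise inner products. -/
theorem stmt0 {V : Type*} [NormedAddCommGroup V] [InnerProductSpace ℝ V]
    {N : ℕ} (hN : 2 ≤ N) (K : ℕ) (hK1 : 1 ≤ K) (hKN : K ≤ N)
    (a : Fin N → V) :
    ‖∑ i, a i‖ ^ 2 =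
      ((N : ℝ) / K) * ((N.choose K : ℝ))⁻¹ *
        ∑ B ∈ Finset.powersetCard K (Finset.univ : Finset (Fin N)), ‖∑ i ∈ B, a i‖ ^ 2
      + 2 * (((N : ℝ) - K) / ((N : ℝ) - 1)) *
        ∑ i : Fin N, ∑ j ∈ Finset.univ.filter (fun j => i < j), ⟪a i, a j⟫ := by
  set S1 : ℝ := ∑ i : Fin N, ‖a i‖ ^ 2 with hS1
  set S2 : ℝ := ∑ i : Fin N, ∑ j ∈ Finset.univ.filter (fun j => i < j), ⟪a i, a j⟫ with hS2
  -- choose the pair count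
  set m : ℕ := if 2 ≤ K then (N - 2).choose (K - 2) else 0 with hm_def
  have hm : ∀ i j : Fin N, i < j →
      ((powersetCard K (univ : Finset (Fin N))).filter (fun B => i ∈ B ∧ j ∈ B)).card = m := by
    intro i j hij
    have hne : i ≠ j := ne_of_lt hij
    have hpred : (powersetCard K (univ : Finset (Fin N))).filter (fun B => i ∈ B ∧ j ∈ B)
        = (powersetCard K (univ : Finset (Fin N))).filter (fun B => ({i, j} : Finset (Fin N)) ⊆ B) := by
      simp [Finset.insert_subset_iff, singleton_subset_iff]
    have hcard2 : ({i, j} : Finset (Fin N)).card = 2 := Finset.card_pair hne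
    by_cases hK2 : 2 ≤ K
    · rw [hpred, card_pc_filter _ _ _ (by simp) (by rwa [hcard2]), hcard2, card_univ,
        Fintype.card_fin, hm_def, if_pos hK2]
    · have hK : K = 1 := by omega
      rw [hm_def, if_neg hK2]
      rw [Finset.card_eq_zero, Finset.filter_eq_empty_iff]
      intro B hB
      rw [mem_powersetCard] at hB
      rintro ⟨hi, hj⟩
      have : ({i, j} : Finset (Fin N)).card ≤ B.card :=
        Finset.card_le_card (by simp [Finset.insert_subset_iff, hi, hj])
      rw [hcard2, hB.2, hK] at this
      omega
  have hbatch : ∑ B ∈ Finset.powersetCard K (Finset.univ : Finset (Fin N)), ‖∑ i ∈ B, a i‖ ^ 2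
      = ((N - 1).choose (K - 1) : ℝ) * S1 + 2 * ((m : ℝ) * S2) := by
    have hexp : ∀ B ∈ Finset.powersetCard K (Finset.univ : Finset (Fin N)),
        ‖∑ i ∈ B, a i‖ ^ 2 = ∑ i ∈ B, ‖a i‖ ^ 2
          + 2 * ∑ i ∈ B, ∑ j ∈ B.filter (fun j => i < j), ⟪a i, a j⟫ := fun B _ =>
      norm_sum_sq_eq B a
    rw [Finset.sum_congr rfl hexp, Finset.sum_add_distrib, ← Finset.mul_sum,
      sum_batches_single (by omega) hK1, sum_batches_pair _ m hm]
  have hexpand : ‖∑ i, a i‖ ^ 2 = S1 + 2 * S2 := by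
    simpa using norm_sum_sq_eq (univ : Finset (Fin N)) a
  -- numeric facts
  have hC : (0 : ℝ) < (N.choose K : ℝ) := by exact_mod_cast Nat.choose_pos hKN
  have hKpos : (0 : ℝ) < (K : ℝ) := by exact_mod_cast hK1
  have hN1 : (N : ℝ) - 1 ≠ 0 := by
    have : (2 : ℝ) ≤ (N : ℝ) := by exact_mod_cast hN
    linarith
  have fA : (N : ℝ) * ((N - 1).choose (K - 1) : ℝ) = (N.choose K : ℝ) * K := by
    have hnat : N * (N - 1).choose (K - 1) = N.choose K * K := by
      have h := Nat.add_one_mul_choose_eq (N - 1) (K - 1)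
      have e1 : N - 1 + 1 = N := by omega
      have e2 : K - 1 + 1 = K := by omega
      simpa [Nat.succ_eq_add_one, e1, e2] using h
    exact_mod_cast hnat
  have hc1 : (N : ℝ) / K * ((N.choose K : ℝ))⁻¹ * ((N - 1).choose (K - 1) : ℝ) = 1 := by
    field_simp
    linarith [fA]
  have hc2 : (N : ℝ) / K * ((N.choose K : ℝ))⁻¹ * (m : ℝ)
      + ((N : ℝ) - K) / ((N : ℝ) - 1) = 1 := by
    by_cases hK2 : 2 ≤ K
    · have fB : ((N : ℝ) - 1) * (m : ℝ) = ((N - 1).choose (K - 1) : ℝ) * ((K : ℝ) - 1) := by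
        have hnat : (N - 1) * (N - 2).choose (K - 2) = (N - 1).choose (K - 1) * (K - 1) := by
          have h := Nat.add_one_mul_choose_eq (N - 2) (K - 2)
          have e1 : N - 2 + 1 = N - 1 := by omega
          have e2 : K - 2 + 1 = K - 1 := by omega
          simpa [Nat.succ_eq_add_one, e1, e2] using h
        rw [hm_def, if_pos hK2]
        have h2 := congrArg (fun n : ℕ => (n : ℝ)) hnat
        push_cast [Nat.cast_sub (show 1 ≤ N by omega), Nat.cast_sub (show 1 ≤ K by omega)] at h2
        simpa using h2
      have hKne : (K : ℝ) ≠ 0 := ne_of_gt hKpos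
      have hCne : (N.choose K : ℝ) ≠ 0 := ne_of_gt hC
      field_simp
      linear_combination (N : ℝ) * fB + ((K : ℝ) - 1) * fA
    · have hK : K = 1 := by omega
      rw [hm_def, if_neg hK2]
      simp [hK]
      exact hN1
  rw [hexpand, hbatch]
  linear_combination (-S1) * hc1 + (-2 * S2) * hc2
end

section
/- Let f = (1/N)∑_{i=1}^N f_i with each f_i : R^d → R differentiable, and let the batch gradient estimator with batch size K be ∇̃_K(x) = (1/K)∑_{i∈B} ∇f_i(x) where B is drawn uniformly among subsets of {1,...,N} of size K. Then for every x, ‖∇f(x)‖² = (K/N)·E[‖∇̃_K(x)‖²] + (2/N²)·((N−K)/(N−1))·∑_{1≤i<j≤N} ⟨∇f_i(x), ∇f_j(x)⟩. -/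
open Finset RealInnerProductSpace

lemma count_contain {α : Type*} [DecidableEq α] (u s : Finset α) (hsu : s ⊆ u) {K : ℕ}
    (hK : s.card ≤ K) :
    ((powersetCard K u).filter (fun B => s ⊆ B)).card = (u.card - s.card).choose (K - s.card) := by
  have hc : u.card - s.card = (u \ s).card := (card_sdiff_of_subset hsu).symm
  rw [hc, ← card_powersetCard]
  apply Finset.card_bij (fun B _ => B \ s)
  · intro B hB
    simp only [mem_filter, mem_powersetCard] at hB
    rw [mem_powersetCard]
    exact ⟨sdiff_subset_sdiff hB.1.1 le_rfl, by
      rw [card_sdiff_of_subset hB.2, hB.1.2]⟩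
  · intro B hB C hC h
    simp only [mem_filter, mem_powersetCard] at hB hC
    have : B \ s ∪ s = C \ s ∪ s := by rw [h]
    rwa [sdiff_union_of_subset hB.2, sdiff_union_of_subset hC.2] at this
  · intro C hC
    rw [mem_powersetCard] at hC
    refine ⟨C ∪ s, ?_, ?_⟩
    · simp only [mem_filter, mem_powersetCard]
      have hdisj : Disjoint C s := disjoint_of_subset_left hC.1 sdiff_disjoint
      refine ⟨⟨union_subset (hC.1.trans sdiff_subset) hsu, ?_⟩, subset_union_right⟩
      rw [card_union_of_disjoint hdisj, hC.2]
      omega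
    · have hdisj : Disjoint C s := disjoint_of_subset_left hC.1 sdiff_disjoint
      rw [union_sdiff_right, sdiff_eq_self_of_disjoint hdisj]

lemma sym_double {ι : Type*} [LinearOrder ι] (s : Finset ι) (t : ι → ι → ℝ)
    (hsym : ∀ i j, t i j = t j i) :
    ∑ i ∈ s, ∑ j ∈ s, t i j =
      ∑ i ∈ s, t i i + 2 * ∑ i ∈ s, ∑ j ∈ s.filter (fun j => i < j), t i j := by
  classical
  have swap : ∑ i ∈ s, ∑ j ∈ s.filter (fun j => j < i), t i j
      = ∑ i ∈ s, ∑ j ∈ s.filter (fun j => i < j), t i j := by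
    calc ∑ i ∈ s, ∑ j ∈ s.filter (fun j => j < i), t i j
        = ∑ i ∈ s, ∑ j ∈ s, if j < i then t i j else 0 := by
          simp [Finset.sum_filter]
      _ = ∑ j ∈ s, ∑ i ∈ s, if j < i then t i j else 0 := Finset.sum_comm
      _ = ∑ j ∈ s, ∑ i ∈ s.filter (fun i => j < i), t i j := by
          simp [Finset.sum_filter]
      _ = ∑ i ∈ s, ∑ j ∈ s.filter (fun j => i < j), t i j := by
          refine Finset.sum_congr rfl fun i hi => Finset.sum_congr rfl fun j hj => hsym j i
  have split : ∀ i ∈ s, ∑ j ∈ s, t i j =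
      t i i + ∑ j ∈ s.filter (fun j => i < j), t i j
        + ∑ j ∈ s.filter (fun j => j < i), t i j := by
    intro i hi
    have hs : s.filter (fun j => ¬ i < j) = insert i (s.filter (fun j => j < i)) := by
      ext j
      simp only [mem_filter, mem_insert, not_lt]
      constructor
      · rintro ⟨hjs, hle⟩
        rcases lt_or_eq_of_le hle with h | h
        · exact Or.inr ⟨hjs, h⟩
        · exact Or.inl h
      · rintro (rfl | ⟨hjs, hlt⟩)
        · exact ⟨hi, le_rfl⟩
        · exact ⟨hjs, hlt.le⟩
    rw [← Finset.sum_filter_add_sum_filter_not s (fun j => i < j), hs,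
      Finset.sum_insert (by simp)]
    ring
  rw [Finset.sum_congr rfl split]
  rw [Finset.sum_add_distrib, Finset.sum_add_distrib, swap]
  ring

/-- Decomposition of `‖∇f(x)‖²` into the expected squared norm of the batch gradient
estimator of size `K` and the average gradient correlation term. -/
theorem stmt1 {d N : ℕ} (hN : 2 ≤ N) (K : ℕ) (hK1 : 1 ≤ K) (hKN : K ≤ N)
    (f : Fin N → EuclideanSpace ℝ (Fin d) → ℝ)
    (hdiff : ∀ i, Differentiable ℝ (f i))
    (x : EuclideanSpace ℝ (Fin d)) :
    ‖gradient (fun y => (N : ℝ)⁻¹ * ∑ i, f i y) x‖ ^ 2 =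
      ((K : ℝ) / N) * (((N.choose K : ℝ))⁻¹ *
        ∑ B ∈ Finset.powersetCard K (Finset.univ : Finset (Fin N)),
          ‖(K : ℝ)⁻¹ • ∑ i ∈ B, gradient (f i) x‖ ^ 2)
      + (2 / (N : ℝ) ^ 2) * (((N : ℝ) - K) / ((N : ℝ) - 1)) *
        ∑ i : Fin N, ∑ j ∈ Finset.univ.filter (fun j => i < j),
          ⟪gradient (f i) x, gradient (f j) x⟫ := by
  classical
  set g : Fin N → EuclideanSpace ℝ (Fin d) := fun i => gradient (f i) x with hg
  -- Step 1: gradient of the average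
  have hgrad : gradient (fun y => (N : ℝ)⁻¹ * ∑ i, f i y) x = (N : ℝ)⁻¹ • ∑ i, g i := by
    apply HasGradientAt.gradient
    rw [hasGradientAt_iff_hasFDerivAt]
    have h1 : ∀ i : Fin N, HasFDerivAt (f i) ((InnerProductSpace.toDual ℝ _) (g i)) x := by
      intro i
      exact hasGradientAt_iff_hasFDerivAt.mp ((hdiff i x).hasGradientAt)
    have h2 : HasFDerivAt (fun y => ∑ i, f i y)
        (∑ i, (InnerProductSpace.toDual ℝ _) (g i)) x :=
      HasFDerivAt.fun_sum (fun i _ => h1 i)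
    have h3 := h2.const_mul ((N : ℝ)⁻¹)
    exact h3.congr_fderiv (by rw [map_smul, map_sum])
  rw [hgrad]
  set t : Fin N → Fin N → ℝ := fun i j => ⟪g i, g j⟫ with ht
  have htsym : ∀ i j, t i j = t j i := fun i j => real_inner_comm _ _
  set A : ℝ := ∑ i, ‖g i‖ ^ 2 with hA
  set P : ℝ := ∑ i : Fin N, ∑ j ∈ Finset.univ.filter (fun j => i < j), t i j with hP
  have hnormsq : ∀ (s : Finset (Fin N)), ‖∑ i ∈ s, g i‖ ^ 2 = ∑ i ∈ s, ∑ j ∈ s, t i j := by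
    intro s
    rw [← real_inner_self_eq_norm_sq, sum_inner]
    exact Finset.sum_congr rfl fun i _ => inner_sum _ _ _
  have htii : ∀ (s : Finset (Fin N)), ∑ i ∈ s, t i i = ∑ i ∈ s, ‖g i‖ ^ 2 := by
    intro s; exact Finset.sum_congr rfl fun i _ => real_inner_self_eq_norm_sq _
  -- LHS
  have hLHS : ‖(N : ℝ)⁻¹ • ∑ i, g i‖ ^ 2 = ((N : ℝ)⁻¹) ^ 2 * (A + 2 * P) := by
    rw [norm_smul, mul_pow, hnormsq, sym_double _ _ htsym, htii]
    norm_num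
    exact Or.inl rfl
  -- the counting constants
  set P0 := Finset.powersetCard K (Finset.univ : Finset (Fin N)) with hP0
  set c2 : ℕ := if 2 ≤ K then (N - 2).choose (K - 2) else 0 with hc2
  have hcard1 : ∀ i : Fin N, (P0.filter (fun B => i ∈ B)).card = (N - 1).choose (K - 1) := by
    intro i
    have := count_contain (Finset.univ : Finset (Fin N)) {i} (by simp)
      (by simpa using hK1)
    simpa [Finset.singleton_subset_iff, Finset.card_univ] using this
  have hcard2 : ∀ i j : Fin N, i ≠ j → (P0.filter (fun B => i ∈ B ∧ j ∈ B)).card = c2 := by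
    intro i j hij
    by_cases hK2 : 2 ≤ K
    · have hij' : ({i, j} : Finset (Fin N)).card = 2 := Finset.card_pair hij
      have h := count_contain (K := K) (Finset.univ : Finset (Fin N)) {i, j} (by simp)
        (by rw [hij']; exact hK2)
      rw [hij', Finset.card_univ, Fintype.card_fin] at h
      rw [hc2, if_pos hK2, ← h]
      congr 1
      apply Finset.filter_congr
      intro B _
      simp [Finset.insert_subset_iff]
    · have hK1' : K = 1 := by omega
      rw [hc2, if_neg hK2]
      rw [Finset.card_eq_zero, Finset.filter_eq_empty_iff]
      intro B hB
      rw [hP0, Finset.mem_powersetCard] at hB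
      rintro ⟨hiB, hjB⟩
      have : ({i, j} : Finset (Fin N)) ⊆ B := by
        rw [Finset.insert_subset_iff]; exact ⟨hiB, Finset.singleton_subset_iff.mpr hjB⟩
      have := Finset.card_le_card this
      rw [Finset.card_pair hij, hB.2, hK1'] at this
      omega
  -- the expectation sum
  have hE : ∑ B ∈ P0, ‖∑ i ∈ B, g i‖ ^ 2
      = ((N - 1).choose (K - 1) : ℝ) * A + 2 * (c2 : ℝ) * P := by
    have step1 : ∀ B ∈ P0, ‖∑ i ∈ B, g i‖ ^ 2
        = ∑ i : Fin N, ∑ j : Fin N, (if i ∈ B ∧ j ∈ B then t i j else 0) := by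
      intro B _
      rw [hnormsq]
      have inner1 : ∀ i : Fin N, ∑ j : Fin N, (if i ∈ B ∧ j ∈ B then t i j else 0)
          = if i ∈ B then ∑ j ∈ B, t i j else 0 := by
        intro i
        by_cases h : i ∈ B
        · rw [if_pos h]
          simp only [h, true_and]
          rw [Finset.sum_ite_mem, Finset.univ_inter]
        · simp [h]
      rw [Finset.sum_congr rfl (fun i _ => inner1 i), Finset.sum_ite_mem, Finset.univ_inter]
    calc ∑ B ∈ P0, ‖∑ i ∈ B, g i‖ ^ 2
        = ∑ B ∈ P0, ∑ i : Fin N, ∑ j : Fin N, (if i ∈ B ∧ j ∈ B then t i j else 0) :=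
          Finset.sum_congr rfl step1
      _ = ∑ i : Fin N, ∑ j : Fin N, ∑ B ∈ P0, (if i ∈ B ∧ j ∈ B then t i j else 0) := by
          rw [Finset.sum_comm]
          exact Finset.sum_congr rfl fun i _ => Finset.sum_comm
      _ = ∑ i : Fin N, ∑ j : Fin N,
            ((P0.filter (fun B => i ∈ B ∧ j ∈ B)).card : ℝ) * t i j := by
          refine Finset.sum_congr rfl fun i _ => Finset.sum_congr rfl fun j _ => ?_
          rw [Finset.sum_ite, Finset.sum_const, Finset.sum_const_zero, add_zero,
            nsmul_eq_mul]
      _ = ∑ i : Fin N, ((P0.filter (fun B => i ∈ B ∧ i ∈ B)).card : ℝ) * t i i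
            + 2 * ∑ i : Fin N, ∑ j ∈ Finset.univ.filter (fun j => i < j),
                ((P0.filter (fun B => i ∈ B ∧ j ∈ B)).card : ℝ) * t i j := by
          apply sym_double (t := fun i j => ((P0.filter (fun B => i ∈ B ∧ j ∈ B)).card : ℝ) * t i j)
          intro i j
          rcases eq_or_ne i j with rfl | hij
          · rfl
          · rw [hcard2 i j hij, hcard2 j i hij.symm, htsym]
      _ = ((N - 1).choose (K - 1) : ℝ) * A + 2 * (c2 : ℝ) * P := by
          congr 1
          · rw [hA, Finset.mul_sum]
            refine Finset.sum_congr rfl fun i _ => ?_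
            simp only [and_self]
            rw [hcard1 i]
            congr 1
            exact real_inner_self_eq_norm_sq (g i)
          · rw [mul_assoc]
            congr 1
            rw [hP, Finset.mul_sum]
            refine Finset.sum_congr rfl fun i _ => ?_
            rw [Finset.mul_sum]
            refine Finset.sum_congr rfl fun j hj => ?_
            have hij : i ≠ j := ne_of_lt (Finset.mem_filter.mp hj).2
            rw [hcard2 i j hij]
  -- nat identities
  have hnat1 : N * (N - 1).choose (K - 1) = N.choose K * K := by
    have h := Nat.add_one_mul_choose_eq (N - 1) (K - 1)
    have e1 : N - 1 + 1 = N := by omega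
    have e2 : K - 1 + 1 = K := by omega
    simpa [Nat.succ_eq_add_one, e1, e2] using h
  have hnat2 : c2 * (N * (N - 1)) = N.choose K * (K * (K - 1)) := by
    by_cases hK2 : 2 ≤ K
    · rw [hc2, if_pos hK2]
      have h1 := Nat.add_one_mul_choose_eq (N - 2) (K - 2)
      have h2 := Nat.add_one_mul_choose_eq (N - 1) (K - 1)
      rw [show N - 2 + 1 = N - 1 by omega, show K - 2 + 1 = K - 1 by omega] at h1
      rw [show N - 1 + 1 = N by omega, show K - 1 + 1 = K by omega] at h2
      calc (N - 2).choose (K - 2) * (N * (N - 1))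
          = N * ((N - 1) * (N - 2).choose (K - 2)) := by ring
        _ = N * ((N - 1).choose (K - 1) * (K - 1)) := by rw [h1]
        _ = (N * (N - 1).choose (K - 1)) * (K - 1) := by ring
        _ = (N.choose K * K) * (K - 1) := by rw [h2]
        _ = N.choose K * (K * (K - 1)) := by ring
    · have hK1' : K = 1 := by omega
      subst hK1'
      simp [hc2]
  -- cast to the reals
  have hr1 : (N : ℝ) * ((N - 1).choose (K - 1) : ℝ) = (N.choose K : ℝ) * K := by
    exact_mod_cast congrArg (Nat.cast : ℕ → ℝ) hnat1
  have hr2 : (c2 : ℝ) * ((N : ℝ) * ((N : ℝ) - 1)) = (N.choose K : ℝ) * ((K : ℝ) * ((K : ℝ) - 1)) := by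
    have := congrArg (Nat.cast : ℕ → ℝ) hnat2
    push_cast [Nat.cast_sub (by omega : 1 ≤ N), Nat.cast_sub hK1] at this
    linarith [this]
  -- finish
  have hsmul : ∀ B : Finset (Fin N), ‖(K : ℝ)⁻¹ • ∑ i ∈ B, g i‖ ^ 2
      = ((K : ℝ)⁻¹) ^ 2 * ‖∑ i ∈ B, g i‖ ^ 2 := by
    intro B
    rw [norm_smul, mul_pow]
    norm_num
  rw [hLHS, Finset.sum_congr rfl (fun B _ => hsmul B), ← Finset.mul_sum, hE]
  have hN0 : (N : ℝ) ≠ 0 := by positivity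
  have hK0 : (K : ℝ) ≠ 0 := by positivity
  have hN1 : (N : ℝ) - 1 ≠ 0 := by
    have : (2 : ℝ) ≤ (N : ℝ) := by exact_mod_cast hN
    linarith
  have hCNK : (N.choose K : ℝ) ≠ 0 := by
    exact_mod_cast (Nat.choose_pos hKN).ne'
  have key : (A + 2 * P) * ((N.choose K : ℝ) * K * ((N : ℝ) - 1))
      = (N : ℝ) * ((N : ℝ) - 1) * (((N - 1).choose (K - 1) : ℝ) * A + 2 * (c2 : ℝ) * P)
        + 2 * ((N : ℝ) - (K : ℝ)) * P * (N.choose K : ℝ) * K := by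
    linear_combination (-(((N : ℝ) - 1) * A)) * hr1 + (-(2 * P)) * hr2
  field_simp
  linear_combination key
end

section
/- Let f = (1/N)∑_{i=1}^N f_i with each f_i differentiable. If for all x ∈ R^d, ∑_{1≤i<j≤N} ⟨∇f_i(x), ∇f_j(x)⟩ ≥ 0 (positive average gradient correlation), then for every batch size K the strong growth condition holds with constant N/K, i.e. E[‖∇̃_K(x)‖²] ≤ (N/K)·‖∇f(x)‖² for all x. -/
open Finset RealInnerProductSpace

lemma count_subsets {α : Type*} [DecidableEq α] (s t : Finset α) (hts : t ⊆ s) (K : ℕ)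
    (htK : t.card ≤ K) :
    ((s.powersetCard K).filter (fun B => t ⊆ B)).card
      = (s.card - t.card).choose (K - t.card) := by
  have key : ((s.powersetCard K).filter (fun B => t ⊆ B)).card
      = ((s \ t).powersetCard (K - t.card)).card := by
    apply Finset.card_nbij' (fun B => B \ t) (fun C => C ∪ t)
    · intro B hB
      simp only [mem_coe, mem_filter, mem_powersetCard] at hB
      obtain ⟨⟨hBs, hBc⟩, htB⟩ := hB
      rw [mem_coe, mem_powersetCard]
      exact ⟨sdiff_subset_sdiff hBs (Finset.Subset.refl t), by rw [card_sdiff_of_subset htB, hBc]⟩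
    · intro C hC
      rw [mem_coe, mem_powersetCard] at hC
      obtain ⟨hCs, hCc⟩ := hC
      have hdisj : Disjoint C t := Finset.sdiff_disjoint.mono_left hCs
      simp only [mem_coe, mem_filter, mem_powersetCard]
      refine ⟨⟨Finset.union_subset (hCs.trans Finset.sdiff_subset) hts, ?_⟩,
        Finset.subset_union_right⟩
      rw [Finset.card_union_of_disjoint hdisj, hCc, Nat.sub_add_cancel htK]
    · intro B hB
      simp only [mem_coe, mem_filter] at hB
      exact Finset.sdiff_union_of_subset hB.2
    · intro C hC
      rw [mem_coe, mem_powersetCard] at hC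
      have hdisj : Disjoint C t := Finset.sdiff_disjoint.mono_left hC.1
      dsimp only
      rw [Finset.union_sdiff_right, Finset.sdiff_eq_self_of_disjoint hdisj]
  rw [key, card_powersetCard, card_sdiff_of_subset hts]

/-- If the gradients are on average positively correlated, then the finite sum
`f = (1/N) ∑ fᵢ` satisfies the strong growth condition with constant `N/K` for every
batch size `K`. -/
theorem stmt2 {d N : ℕ} (hN : 2 ≤ N)
    (f : Fin N → EuclideanSpace ℝ (Fin d) → ℝ)
    (hdiff : ∀ i, Differentiable ℝ (f i))
    (hposcorr : ∀ x : EuclideanSpace ℝ (Fin d),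
      0 ≤ ∑ i : Fin N, ∑ j ∈ Finset.univ.filter (fun j => i < j),
        ⟪gradient (f i) x, gradient (f j) x⟫) :
    ∀ K : ℕ, 1 ≤ K → K ≤ N → ∀ x : EuclideanSpace ℝ (Fin d),
      ((N.choose K : ℝ))⁻¹ *
        ∑ B ∈ Finset.powersetCard K (Finset.univ : Finset (Fin N)),
          ‖(K : ℝ)⁻¹ • ∑ i ∈ B, gradient (f i) x‖ ^ 2
      ≤ ((N : ℝ) / K) * ‖gradient (fun y => (N : ℝ)⁻¹ * ∑ i, f i y) x‖ ^ 2 := by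
  intro K hK1 hKN x
  set g : Fin N → EuclideanSpace ℝ (Fin d) := fun i => gradient (f i) x with hg
  have hgrad : gradient (fun y => (N : ℝ)⁻¹ * ∑ i, f i y) x = (N : ℝ)⁻¹ • ∑ i, g i := by
    have hsum : DifferentiableAt ℝ (fun y => ∑ i, f i y) x :=
      DifferentiableAt.fun_sum (fun i _ => (hdiff i).differentiableAt)
    unfold gradient
    rw [fderiv_const_mul hsum, fderiv_fun_sum (fun i _ => (hdiff i).differentiableAt)]
    simp [map_smul, map_sum, hg, gradient]
  set c : Fin N → Fin N → ℝ := fun i j => ⟪g i, g j⟫ with hc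
  have hcsymm : ∀ i j, c i j = c j i := fun i j => real_inner_comm _ _
  set S : ℝ := ∑ i, c i i with hS
  set P : ℝ := ∑ i : Fin N, ∑ j ∈ Finset.univ.filter (fun j => i < j), c i j with hP
  have hP0 : 0 ≤ P := hposcorr x
  have hS0 : 0 ≤ S := Finset.sum_nonneg fun i _ => real_inner_self_nonneg
  set a : ℕ := (N - 1).choose (K - 1) with ha
  set b : ℕ := if 2 ≤ K then (N - 2).choose (K - 2) else 0 with hb
  set C : ℕ := N.choose K with hC
  set PK := Finset.powersetCard K (Finset.univ : Finset (Fin N)) with hPK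
  -- counts
  have cnt_diag : ∀ i : Fin N,
      ((PK.filter (fun B => i ∈ B ∧ i ∈ B)).card) = a := by
    intro i
    have h := count_subsets (Finset.univ : Finset (Fin N)) {i} (by simp) K (by simpa using hK1)
    simpa [Finset.singleton_subset_iff, and_self] using h
  have cnt_off : ∀ i j : Fin N, i ≠ j →
      ((PK.filter (fun B => i ∈ B ∧ j ∈ B)).card) = b := by
    intro i j hij
    by_cases h2 : 2 ≤ K
    · have hcard2 : ({i, j} : Finset (Fin N)).card = 2 := by
        rw [Finset.card_insert_of_notMem (by simp [hij]), Finset.card_singleton]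
      have h := count_subsets (Finset.univ : Finset (Fin N)) {i, j} (by simp) K
        (by rw [hcard2]; exact h2)
      rw [hcard2] at h
      have hfe : PK.filter (fun B => i ∈ B ∧ j ∈ B)
          = PK.filter (fun B => ({i, j} : Finset (Fin N)) ⊆ B) := by
        apply Finset.filter_congr
        intro B _
        simp [Finset.insert_subset_iff]
      rw [hfe, h, hb, if_pos h2]
      simp
    · have hK : K = 1 := by omega
      rw [hb, if_neg h2]
      rw [Finset.card_eq_zero, Finset.filter_eq_empty_iff]
      intro B hB
      rw [hPK, Finset.mem_powersetCard] at hB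
      rintro ⟨hiB, hjB⟩
      have hle : ({i, j} : Finset (Fin N)).card ≤ B.card := by
        apply Finset.card_le_card
        intro z hz
        simp only [Finset.mem_insert, Finset.mem_singleton] at hz
        rcases hz with rfl | rfl <;> assumption
      rw [Finset.card_insert_of_notMem (by simp [hij]), Finset.card_singleton, hB.2, hK] at hle
      omega
  -- b ≤ a
  have hba : b ≤ a := by
    by_cases h2 : 2 ≤ K
    · set i0 : Fin N := ⟨0, by omega⟩ with hi0
      set j0 : Fin N := ⟨1, by omega⟩ with hj0
      have hij : i0 ≠ j0 := by simp [hi0, hj0, Fin.ext_iff]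
      rw [← cnt_off i0 j0 hij, ← cnt_diag i0]
      apply Finset.card_le_card
      intro B hB
      rw [Finset.mem_filter] at hB ⊢
      exact ⟨hB.1, hB.2.1, hB.2.1⟩
    · rw [hb, if_neg h2]; omega
  -- expand squared norm
  have expand : ∀ B : Finset (Fin N), ‖∑ i ∈ B, g i‖ ^ 2 = ∑ i ∈ B, ∑ j ∈ B, c i j := by
    intro B
    rw [← real_inner_self_eq_norm_sq, sum_inner]
    exact Finset.sum_congr rfl fun i _ => inner_sum _ _ _
  -- off-diagonal sum
  have hoff : ∑ i, ∑ j ∈ Finset.univ.erase i, c i j = 2 * P := by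
    have e1 : ∀ i : Fin N, Finset.univ.erase i
        = Finset.univ.filter (fun j => j < i) ∪ Finset.univ.filter (fun j => i < j) := by
      intro i
      ext j
      simp only [Finset.mem_erase, Finset.mem_univ, and_true, Finset.mem_union,
        Finset.mem_filter, true_and]
      constructor
      · intro h; exact lt_or_gt_of_ne h
      · rintro (h | h)
        · exact h.ne
        · exact h.ne'
    have hdisj : ∀ i : Fin N, Disjoint (Finset.univ.filter (fun j => j < i))
        (Finset.univ.filter (fun j => i < j)) := by
      intro i
      rw [Finset.disjoint_left]
      intro j hj hj'
      simp only [Finset.mem_filter] at hj hj'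
      exact absurd (hj.2.trans hj'.2) (lt_irrefl j)
    have swap : ∑ i : Fin N, ∑ j ∈ Finset.univ.filter (fun j => j < i), c i j = P := by
      have h1 : ∑ i : Fin N, ∑ j ∈ Finset.univ.filter (fun j => j < i), c i j
          = ∑ i : Fin N, ∑ j : Fin N, if j < i then c i j else 0 := by
        exact Finset.sum_congr rfl fun i _ => (Finset.sum_filter _ _)
      rw [h1, Finset.sum_comm]
      rw [hP]
      refine Finset.sum_congr rfl fun j _ => ?_
      rw [Finset.sum_filter]
      exact Finset.sum_congr rfl fun i _ => by
        by_cases h : j < i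
        · simp [h, hcsymm]
        · simp [h]
    calc ∑ i : Fin N, ∑ j ∈ Finset.univ.erase i, c i j
        = ∑ i : Fin N, (∑ j ∈ Finset.univ.filter (fun j => j < i), c i j
            + ∑ j ∈ Finset.univ.filter (fun j => i < j), c i j) := by
          refine Finset.sum_congr rfl fun i _ => ?_
          rw [e1 i, Finset.sum_union (hdisj i)]
      _ = 2 * P := by rw [Finset.sum_add_distrib, swap, ← hP]; ring
  -- the total count identity
  have total : ∑ B ∈ PK, ‖∑ i ∈ B, g i‖ ^ 2 = (a : ℝ) * S + (b : ℝ) * (2 * P) := by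
    have step1 : ∀ B ∈ PK, ‖∑ i ∈ B, g i‖ ^ 2
        = ∑ i : Fin N, ∑ j : Fin N, if i ∈ B ∧ j ∈ B then c i j else 0 := by
      intro B _
      rw [expand B]
      have h1 : ∀ i, (∑ j ∈ B, c i j) = ∑ j : Fin N, if j ∈ B then c i j else 0 := by
        intro i
        rw [← Finset.sum_filter]
        apply Finset.sum_congr _ fun _ _ => rfl
        ext j; simp
      calc ∑ i ∈ B, ∑ j ∈ B, c i j
          = ∑ i ∈ B, ∑ j : Fin N, if j ∈ B then c i j else 0 :=
            Finset.sum_congr rfl fun i _ => h1 i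
        _ = ∑ i : Fin N, if i ∈ B then (∑ j : Fin N, if j ∈ B then c i j else 0) else 0 := by
            rw [← Finset.sum_filter]
            apply Finset.sum_congr _ fun _ _ => rfl
            ext i; simp
        _ = ∑ i : Fin N, ∑ j : Fin N, if i ∈ B ∧ j ∈ B then c i j else 0 := by
            refine Finset.sum_congr rfl fun i _ => ?_
            by_cases hi : i ∈ B <;> simp [hi]
    rw [Finset.sum_congr rfl step1, Finset.sum_comm]
    have step2 : ∀ i : Fin N, ∑ B ∈ PK, ∑ j : Fin N, (if i ∈ B ∧ j ∈ B then c i j else 0)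
        = ∑ j : Fin N, ∑ B ∈ PK, (if i ∈ B ∧ j ∈ B then c i j else 0) := fun i =>
      Finset.sum_comm
    rw [Finset.sum_congr rfl fun i _ => step2 i]
    have step3 : ∀ i j : Fin N, ∑ B ∈ PK, (if i ∈ B ∧ j ∈ B then c i j else 0)
        = ((if i = j then (a : ℝ) else (b : ℝ))) * c i j := by
      intro i j
      rw [← Finset.sum_filter, Finset.sum_const, nsmul_eq_mul]
      by_cases hij : i = j
      · subst hij; rw [cnt_diag i, if_pos rfl]
      · rw [cnt_off i j hij, if_neg hij]
    rw [Finset.sum_congr rfl fun i _ => Finset.sum_congr rfl fun j _ => step3 i j]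
    have step4 : ∀ i : Fin N, ∑ j : Fin N, (if i = j then (a : ℝ) else (b : ℝ)) * c i j
        = (a : ℝ) * c i i + (b : ℝ) * ∑ j ∈ Finset.univ.erase i, c i j := by
      intro i
      rw [← Finset.add_sum_erase _ _ (Finset.mem_univ i), if_pos rfl, Finset.mul_sum]
      congr 1
      refine Finset.sum_congr rfl fun j hj => ?_
      rw [if_neg fun h => (Finset.mem_erase.1 hj).1 h.symm]
    rw [Finset.sum_congr rfl fun i _ => step4 i, Finset.sum_add_distrib, ← Finset.mul_sum,
      ← Finset.mul_sum, hoff, ← hS]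
  -- norms of the smul
  have hsm : ∀ (r : ℝ) (v : EuclideanSpace ℝ (Fin d)), ‖r • v‖ ^ 2 = r ^ 2 * ‖v‖ ^ 2 := by
    intro r v
    rw [norm_smul, mul_pow, Real.norm_eq_abs, sq_abs]
  have hGsq : ‖∑ i, g i‖ ^ 2 = S + 2 * P := by
    rw [expand Finset.univ]
    have h5 : ∀ i : Fin N, ∑ j : Fin N, c i j
        = c i i + ∑ j ∈ Finset.univ.erase i, c i j :=
      fun i => (Finset.add_sum_erase _ _ (Finset.mem_univ i)).symm
    rw [Finset.sum_congr rfl fun i _ => h5 i, Finset.sum_add_distrib, hoff, ← hS]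
  -- put everything together
  rw [hgrad, hsm, hGsq]
  have hsum2 : ∑ B ∈ PK, ‖(K : ℝ)⁻¹ • B.sum g‖ ^ 2
      = ((K : ℝ)⁻¹) ^ 2 * ((a : ℝ) * S + (b : ℝ) * (2 * P)) := by
    rw [← total, Finset.mul_sum]
    exact Finset.sum_congr rfl fun B _ => hsm _ _
  rw [hsum2]
  have hK0 : (0 : ℝ) < K := by exact_mod_cast hK1
  have hN0 : (0 : ℝ) < N := by positivity
  have hC0 : (0 : ℝ) < C := by exact_mod_cast Nat.choose_pos hKN
  have hNa : (N : ℝ) * a = (K : ℝ) * C := by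
    have hnat : N * a = C * K := by
      have h := Nat.add_one_mul_choose_eq (N - 1) (K - 1)
      rw [Nat.sub_add_cancel (by omega),
        Nat.sub_add_cancel (by omega)] at h
      exact h
    calc (N : ℝ) * a = ((N * a : ℕ) : ℝ) := by push_cast; ring
      _ = ((C * K : ℕ) : ℝ) := by rw [hnat]
      _ = (K : ℝ) * C := by push_cast; ring
  have hba' : (b : ℝ) ≤ (a : ℝ) := by exact_mod_cast hba
  have lhs_eq : (C : ℝ)⁻¹ * (((K : ℝ)⁻¹) ^ 2 * ((a : ℝ) * S + (b : ℝ) * (2 * P)))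
      = ((a : ℝ) * S + (b : ℝ) * (2 * P)) / ((C : ℝ) * (K : ℝ) ^ 2) := by
    field_simp
  have rhs_eq : (N : ℝ) / K * (((N : ℝ)⁻¹) ^ 2 * (S + 2 * P))
      = (S + 2 * P) / ((N : ℝ) * (K : ℝ)) := by
    field_simp
  rw [lhs_eq, rhs_eq, div_le_div_iff₀ (by positivity) (by positivity)]
  have hCK : (C : ℝ) * (K : ℝ) ^ 2 = (N : ℝ) * a * K := by linear_combination (-(K:ℝ)) * hNa
  rw [hCK]
  nlinarith [mul_nonneg (mul_nonneg hN0.le hK0.le)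
    (mul_nonneg (sub_nonneg.2 hba') hP0), sq_nonneg (K : ℝ), mul_nonneg hS0 hK0.le]
end

section
/- Let f = (1/N)∑_{i=1}^N f_i with each f_i differentiable. Suppose the RACOGA condition holds with constant c > −1/2: for all x not in the set where all ∇f_i(x) vanish, ∑_{1≤i<j≤N} ⟨∇f_i(x), ∇f_j(x)⟩ ≥ c · ∑_{i=1}^N ‖∇f_i(x)‖². Then for batch size 1, the strong growth condition holds with constant N/(1+2c), i.e. (1/N)∑_{i=1}^N ‖∇f_i(x)‖² ≤ (N/(1+2c))·‖∇f(x)‖² for all x. -/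
open Finset RealInnerProductSpace

lemma grad_scaled_sum {d N : ℕ} (f : Fin N → EuclideanSpace ℝ (Fin d) → ℝ)
    (hdiff : ∀ i, Differentiable ℝ (f i)) (a : ℝ) (x : EuclideanSpace ℝ (Fin d)) :
    gradient (fun y => a * ∑ i, f i y) x = a • ∑ i, gradient (f i) x := by
  have h : ∀ i : Fin N, HasFDerivAt (f i)
      ((InnerProductSpace.toDual ℝ _) (gradient (f i) x)) x :=
    fun i => ((hdiff i x).hasGradientAt).hasFDerivAt
  have hsum : HasFDerivAt (fun y => ∑ i, f i y)
      (∑ i, (InnerProductSpace.toDual ℝ _) (gradient (f i) x)) x :=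
    HasFDerivAt.fun_sum (fun i _ => h i)
  have hmul := hsum.const_mul a
  have : HasGradientAt (fun y => a * ∑ i, f i y)
      ((InnerProductSpace.toDual ℝ _).symm
        (a • ∑ i, (InnerProductSpace.toDual ℝ _) (gradient (f i) x))) x :=
    (hasFDerivAt_iff_hasGradientAt).mp hmul
  rw [this.gradient]
  rw [map_smul, map_sum]
  simp
  rfl

lemma norm_sum_sq_expand {N : ℕ} {E : Type*} [NormedAddCommGroup E]
    [InnerProductSpace ℝ E] (g : Fin N → E) :
    ‖∑ i, g i‖ ^ 2 = ∑ i, ‖g i‖ ^ 2 +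
      2 * ∑ i, ∑ j ∈ Finset.univ.filter (fun j => i < j), ⟪g i, g j⟫ := by
  have h : ‖∑ i, g i‖ ^ 2 = ∑ i, ∑ j, ⟪g i, g j⟫ := by
    rw [← real_inner_self_eq_norm_sq, sum_inner]
    exact Finset.sum_congr rfl fun i _ => by rw [inner_sum]
  rw [h]
  have hdecomp : ∀ i j : Fin N, ⟪g i, g j⟫ =
      (if i = j then ⟪g i, g j⟫ else 0) + (if i < j then ⟪g i, g j⟫ else 0)
        + (if j < i then ⟪g i, g j⟫ else 0) := by
    intro i j
    rcases lt_trichotomy i j with h' | h' | h'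
    · simp [h', h'.ne, not_lt_of_gt h']
    · simp [h']
    · simp [h'.ne', (not_lt_of_gt h' : ¬ i < j), h']
  calc ∑ i, ∑ j, ⟪g i, g j⟫
      = ∑ i : Fin N, ∑ j : Fin N, ((if i = j then ⟪g i, g j⟫ else 0)
          + (if i < j then ⟪g i, g j⟫ else 0) + (if j < i then ⟪g i, g j⟫ else 0)) := by
        exact Finset.sum_congr rfl fun i _ => Finset.sum_congr rfl fun j _ => hdecomp i j
    _ = (∑ i : Fin N, ∑ j : Fin N, if i = j then ⟪g i, g j⟫ else 0)
        + (∑ i : Fin N, ∑ j : Fin N, if i < j then ⟪g i, g j⟫ else 0)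
        + (∑ i : Fin N, ∑ j : Fin N, if j < i then ⟪g i, g j⟫ else 0) := by
        simp [Finset.sum_add_distrib]
    _ = ∑ i, ‖g i‖ ^ 2 +
        2 * ∑ i, ∑ j ∈ Finset.univ.filter (fun j => i < j), ⟪g i, g j⟫ := by
        have h1 : (∑ i : Fin N, ∑ j : Fin N, if i = j then ⟪g i, g j⟫ else 0)
            = ∑ i, ‖g i‖ ^ 2 := by
          simp [real_inner_self_eq_norm_sq]
        have h2 : (∑ i : Fin N, ∑ j : Fin N, if i < j then ⟪g i, g j⟫ else 0)
            = ∑ i, ∑ j ∈ Finset.univ.filter (fun j => i < j), ⟪g i, g j⟫ := by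
          exact Finset.sum_congr rfl fun i _ => (Finset.sum_filter _ _).symm
        have h3 : (∑ i : Fin N, ∑ j : Fin N, if j < i then ⟪g i, g j⟫ else 0)
            = ∑ i, ∑ j ∈ Finset.univ.filter (fun j => i < j), ⟪g i, g j⟫ := by
          rw [Finset.sum_comm]
          refine Finset.sum_congr rfl fun i _ => ?_
          rw [← Finset.sum_filter]
          exact Finset.sum_congr rfl fun j _ => real_inner_comm _ _
        rw [h1, h2, h3]; ring

/-- Under the RACOGA condition with constant `c > -1/2`, the finite sum
`f = (1/N) ∑ fᵢ` satisfies the strong growth condition with constant `N/(1+2c)`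
for batch size `1`. -/
theorem stmt3 {d N : ℕ} (hN : 1 ≤ N)
    (f : Fin N → EuclideanSpace ℝ (Fin d) → ℝ)
    (hdiff : ∀ i, Differentiable ℝ (f i))
    (c : ℝ) (hc : -(1 / 2 : ℝ) < c)
    (hracoga : ∀ x : EuclideanSpace ℝ (Fin d), (∃ i, gradient (f i) x ≠ 0) →
      c * ∑ i : Fin N, ‖gradient (f i) x‖ ^ 2 ≤
        ∑ i : Fin N, ∑ j ∈ Finset.univ.filter (fun j => i < j),
          ⟪gradient (f i) x, gradient (f j) x⟫) :
    ∀ x : EuclideanSpace ℝ (Fin d),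
      (N : ℝ)⁻¹ * ∑ i : Fin N, ‖gradient (f i) x‖ ^ 2
        ≤ ((N : ℝ) / (1 + 2 * c)) *
          ‖gradient (fun y => (N : ℝ)⁻¹ * ∑ i, f i y) x‖ ^ 2 := by
  intro x
  set g : Fin N → EuclideanSpace ℝ (Fin d) := fun i => gradient (f i) x with hg
  have hNpos : (0 : ℝ) < N := by exact_mod_cast Nat.lt_of_lt_of_le Nat.zero_lt_one hN
  have hcpos : (0 : ℝ) < 1 + 2 * c := by linarith
  have hgrad : gradient (fun y => (N : ℝ)⁻¹ * ∑ i, f i y) x = (N : ℝ)⁻¹ • ∑ i, g i :=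
    grad_scaled_sum f hdiff _ x
  rw [hgrad, norm_smul]
  by_cases hz : ∃ i, g i ≠ 0
  · have hrac := hracoga x hz
    have hexp := norm_sum_sq_expand g
    have hS : (1 + 2 * c) * ∑ i, ‖g i‖ ^ 2 ≤ ‖∑ i, g i‖ ^ 2 := by
      rw [hexp]; nlinarith [hrac]
    have : ∑ i, ‖g i‖ ^ 2 ≤ ‖∑ i, g i‖ ^ 2 / (1 + 2 * c) := by
      rw [le_div_iff₀ hcpos]; linarith
    calc (N : ℝ)⁻¹ * ∑ i, ‖g i‖ ^ 2
        ≤ (N : ℝ)⁻¹ * (‖∑ i, g i‖ ^ 2 / (1 + 2 * c)) := by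
          apply mul_le_mul_of_nonneg_left this (by positivity)
      _ = ((N : ℝ) / (1 + 2 * c)) * (‖(N : ℝ)⁻¹‖ * ‖∑ i, g i‖) ^ 2 := by
          rw [Real.norm_eq_abs, abs_of_pos (inv_pos.mpr hNpos)]
          field_simp
  · push_neg at hz
    have hz' : ∀ i, gradient (f i) x = 0 := hz
    simp only [hz', norm_zero]
    rw [show ((0:ℝ))^2 = 0 by norm_num, Finset.sum_const_zero, mul_zero]
    exact mul_nonneg (div_nonneg hNpos.le hcpos.le) (sq_nonneg _)
end

section
/- Let f = (1/N)∑_{i=1}^N f_i. If the strong growth condition holds with constant ρ_1 for batch size 1, i.e. (1/N)∑_{i=1}^N ‖∇f_i(x)‖² ≤ ρ_1 ‖∇f(x)‖² for all x, then for every batch size K with 1 ≤ K ≤ N, the strong growth condition holds with some constant ρ_K satisfying ρ_K ≤ (1/(K(N−1)))·(ρ_1(N−K) + (K−1)N). -/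
open Finset RealInnerProductSpace

lemma count_supset {α} [DecidableEq α] {s T : Finset α} (hT : T ⊆ s) {K : ℕ} (hK : T.card ≤ K) :
    ((powersetCard K s).filter (fun B => T ⊆ B)).card = (s.card - T.card).choose (K - T.card) := by
  rw [← card_sdiff_of_subset hT, ← Finset.card_powersetCard]
  apply Finset.card_bij' (fun B _ => B \ T) (fun C _ => C ∪ T)
  · intro B hB
    simp only [mem_filter, mem_powersetCard] at hB
    simp only [mem_powersetCard]
    exact ⟨sdiff_subset_sdiff hB.1.1 le_rfl, by rw [card_sdiff_of_subset hB.2, hB.1.2]⟩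
  · intro C hC
    simp only [mem_powersetCard] at hC
    simp only [mem_filter, mem_powersetCard]
    have hdisj : Disjoint C T := disjoint_of_subset_left hC.1 sdiff_disjoint
    refine ⟨⟨union_subset (hC.1.trans sdiff_subset) hT, ?_⟩, subset_union_right⟩
    rw [card_union_of_disjoint hdisj, hC.2]
    have h1 := card_le_card hT
    omega
  · intro B hB
    simp only [mem_filter, mem_powersetCard] at hB
    exact sdiff_union_of_subset hB.2
  · intro C hC
    simp only [mem_powersetCard] at hC
    have hdisj : Disjoint C T := disjoint_of_subset_left hC.1 sdiff_disjoint
    exact union_sdiff_cancel_right hdisj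

lemma sgc_identity {E : Type*} [NormedAddCommGroup E] [InnerProductSpace ℝ E]
    {N K : ℕ} (hK1 : 1 ≤ K) (hKN : K ≤ N) (g : Fin N → E) :
    ∑ B ∈ powersetCard K (univ : Finset (Fin N)), ‖∑ i ∈ B, g i‖ ^ 2
      = ((N-1).choose (K-1) : ℝ) * ∑ i, ‖g i‖ ^ 2
        + ((if 2 ≤ K then (N-2).choose (K-2) else 0 : ℕ) : ℝ) *
            (‖∑ i, g i‖ ^ 2 - ∑ i, ‖g i‖ ^ 2) := by
  classical
  set c : Fin N → Fin N → ℝ := fun i j => ⟪g i, g j⟫ with hc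
  set P := powersetCard K (univ : Finset (Fin N)) with hP
  have hnorm : ∀ B : Finset (Fin N), ‖∑ i ∈ B, g i‖ ^ 2 = ∑ i ∈ B, ∑ j ∈ B, c i j := by
    intro B
    rw [← real_inner_self_eq_norm_sq, sum_inner]
    exact Finset.sum_congr rfl fun i _ => inner_sum _ _ _
  have h1 : ∀ (B : Finset (Fin N)) (h : Fin N → ℝ),
      ∑ i : Fin N, (if i ∈ B then h i else 0) = ∑ i ∈ B, h i := by
    intro B h; rw [Finset.sum_ite_mem, univ_inter]
  have hdouble : ∀ B : Finset (Fin N), ∑ i ∈ B, ∑ j ∈ B, c i j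
      = ∑ i : Fin N, ∑ j : Fin N, if i ∈ B ∧ j ∈ B then c i j else 0 := by
    intro B
    rw [← h1 B]
    apply Finset.sum_congr rfl
    intro i _
    split_ifs with hi
    · rw [← h1 B]; apply Finset.sum_congr rfl; intro j _; simp [hi]
    · simp [hi]
  have hcnt : ∀ i j : Fin N, ∑ B ∈ P, (if i ∈ B ∧ j ∈ B then c i j else 0)
      = ((P.filter (fun B => i ∈ B ∧ j ∈ B)).card : ℝ) * c i j := by
    intro i j
    rw [← Finset.sum_filter, Finset.sum_const, nsmul_eq_mul]
  have hdiag : ∀ i : Fin N,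
      (P.filter (fun B => i ∈ B ∧ i ∈ B)).card = (N-1).choose (K-1) := by
    intro i
    have he : (P.filter (fun B => i ∈ B ∧ i ∈ B))
        = P.filter (fun B => ({i} : Finset (Fin N)) ⊆ B) := by
      apply filter_congr; intro B _; simp
    rw [he, hP, count_supset (by simp) (by simpa using hK1)]
    simp
  have hoff : ∀ i j : Fin N, i ≠ j →
      (P.filter (fun B => i ∈ B ∧ j ∈ B)).card
        = (if 2 ≤ K then (N-2).choose (K-2) else 0) := by
    intro i j hij
    have he : (P.filter (fun B => i ∈ B ∧ j ∈ B))
        = P.filter (fun B => ({i, j} : Finset (Fin N)) ⊆ B) := by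
      apply filter_congr; intro B _; simp [insert_subset_iff]
    have hcard2 : ({i, j} : Finset (Fin N)).card = 2 := by
      rw [card_insert_of_notMem (by simpa using hij), card_singleton]
    split_ifs with h2
    · rw [he, hP, count_supset (by simp) (by rw [hcard2]; exact h2)]
      simp [hcard2]
    · rw [he]
      convert Finset.card_empty
      rw [Finset.eq_empty_iff_forall_notMem]
      intro B hB
      simp only [mem_filter, hP, mem_powersetCard] at hB
      have := card_le_card hB.2
      rw [hcard2, hB.1.2] at this
      omega
  calc ∑ B ∈ P, ‖∑ i ∈ B, g i‖ ^ 2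
      = ∑ B ∈ P, ∑ i : Fin N, ∑ j : Fin N, (if i ∈ B ∧ j ∈ B then c i j else 0) := by
        exact Finset.sum_congr rfl fun B _ => by rw [hnorm B, hdouble B]
    _ = ∑ i : Fin N, ∑ j : Fin N, ∑ B ∈ P, (if i ∈ B ∧ j ∈ B then c i j else 0) := by
        rw [Finset.sum_comm]
        exact Finset.sum_congr rfl fun i _ => Finset.sum_comm
    _ = ∑ i : Fin N, ∑ j : Fin N,
          ((P.filter (fun B => i ∈ B ∧ j ∈ B)).card : ℝ) * c i j := by
        exact Finset.sum_congr rfl fun i _ => Finset.sum_congr rfl fun j _ => hcnt i j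
    _ = ∑ i : Fin N, (((N-1).choose (K-1) : ℝ) * c i i
          + ((if 2 ≤ K then (N-2).choose (K-2) else 0 : ℕ) : ℝ) * (∑ j, c i j - c i i)) := by
        apply Finset.sum_congr rfl
        intro i _
        rw [Finset.sum_eq_sum_sdiff_singleton_add (mem_univ i)]
        have hsub : ∑ j ∈ univ \ {i}, c i j = ∑ j, c i j - c i i := by
          rw [Finset.sum_eq_sum_sdiff_singleton_add (mem_univ i) (c i)]; ring
        have hterm : ∀ j ∈ univ \ {i},
            ((P.filter (fun B => i ∈ B ∧ j ∈ B)).card : ℝ) * c i j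
              = ((if 2 ≤ K then (N-2).choose (K-2) else 0 : ℕ) : ℝ) * c i j := by
          intro j hj
          have hji : i ≠ j := by
            simp only [mem_sdiff, mem_singleton] at hj
            exact fun h => hj.2 h.symm
          rw [hoff i j hji]
        rw [Finset.sum_congr rfl hterm, ← Finset.mul_sum, hsub, hdiag i]
        ring
    _ = ((N-1).choose (K-1) : ℝ) * ∑ i, ‖g i‖ ^ 2
        + ((if 2 ≤ K then (N-2).choose (K-2) else 0 : ℕ) : ℝ) *
            (‖∑ i, g i‖ ^ 2 - ∑ i, ‖g i‖ ^ 2) := by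
        rw [Finset.sum_add_distrib, ← Finset.mul_sum, ← Finset.mul_sum,
          Finset.sum_sub_distrib]
        have hS : ∀ i, c i i = ‖g i‖ ^ 2 := fun i => real_inner_self_eq_norm_sq _
        have hT : ∑ i : Fin N, ∑ j : Fin N, c i j = ‖∑ i, g i‖ ^ 2 := by
          rw [← real_inner_self_eq_norm_sq, sum_inner]
          exact Finset.sum_congr rfl fun i _ => (inner_sum _ _ _).symm
        simp_rw [hS, hT]

set_option maxHeartbeats 1600000 in
/-- If the strong growth condition holds for batch size `1` with constant `ρ₁`, then for
every batch size `K` it holds with some constant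
`ρ_K ≤ (ρ₁(N-K) + (K-1)N) / (K(N-1))`. -/
theorem stmt5 {d N : ℕ} (hN : 2 ≤ N)
    (f : Fin N → EuclideanSpace ℝ (Fin d) → ℝ)
    (hdiff : ∀ i, Differentiable ℝ (f i))
    (ρ₁ : ℝ)
    (hsgc1 : ∀ x : EuclideanSpace ℝ (Fin d),
      (N : ℝ)⁻¹ * ∑ i : Fin N, ‖gradient (f i) x‖ ^ 2
        ≤ ρ₁ * ‖gradient (fun y => (N : ℝ)⁻¹ * ∑ i, f i y) x‖ ^ 2) :
    ∀ K : ℕ, 1 ≤ K → K ≤ N → ∃ ρK : ℝ,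
      ρK ≤ ((K : ℝ) * ((N : ℝ) - 1))⁻¹ * (ρ₁ * ((N : ℝ) - K) + ((K : ℝ) - 1) * N) ∧
      ∀ x : EuclideanSpace ℝ (Fin d),
        ((N.choose K : ℝ))⁻¹ *
          ∑ B ∈ Finset.powersetCard K (Finset.univ : Finset (Fin N)),
            ‖(K : ℝ)⁻¹ • ∑ i ∈ B, gradient (f i) x‖ ^ 2
        ≤ ρK * ‖gradient (fun y => (N : ℝ)⁻¹ * ∑ i, f i y) x‖ ^ 2 := by
  intro K hK1 hKN
  set n : ℝ := (N : ℝ) with hn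
  set k : ℝ := (K : ℝ) with hk
  have hn2 : (2 : ℝ) ≤ n := by rw [hn]; exact_mod_cast hN
  have hk1 : (1 : ℝ) ≤ k := by rw [hk]; exact_mod_cast hK1
  have hkn : k ≤ n := by rw [hn, hk]; exact_mod_cast hKN
  have hn0 : n ≠ 0 := by linarith
  have hk0 : k ≠ 0 := by linarith
  have hn1 : n - 1 ≠ 0 := by linarith
  set C : ℝ := (N.choose K : ℝ) with hC
  have hCpos : 0 < C := by rw [hC]; exact_mod_cast Nat.choose_pos hKN
  set C1 : ℝ := ((N-1).choose (K-1) : ℝ) with hC1def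
  set C2 : ℝ := ((if 2 ≤ K then (N-2).choose (K-2) else 0 : ℕ) : ℝ) with hC2def
  have hA : n * C1 = C * k := by
    have := Nat.add_one_mul_choose_eq (N-1) (K-1)
    have hNs : N - 1 + 1 = N := by omega
    have hKs : K - 1 + 1 = K := by omega
    rw [hNs, hKs] at this
    rw [hn, hk, hC, hC1def]
    exact_mod_cast this
  have hB : (n - 1) * C2 = C1 * (k - 1) := by
    by_cases h2 : 2 ≤ K
    · have := Nat.add_one_mul_choose_eq (N-2) (K-2)
      have hNs : N - 2 + 1 = N - 1 := by omega
      have hKs : K - 2 + 1 = K - 1 := by omega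
      rw [hNs, hKs] at this
      have hcast : ((N-1 : ℕ) : ℝ) = n - 1 := by
        rw [hn]; push_cast [Nat.cast_sub (by omega : 1 ≤ N)]; ring
      have hcast2 : ((K-1 : ℕ) : ℝ) = k - 1 := by
        rw [hk]; push_cast [Nat.cast_sub (by omega : 1 ≤ K)]; ring
      rw [hn, hk, hC2def, if_pos h2, hC1def, ← hcast, ← hcast2]
      exact_mod_cast this
    · have hKeq : K = 1 := by omega
      have hC2z : C2 = 0 := by rw [hC2def, if_neg h2]; simp
      have hkz : k = 1 := by rw [hk, hKeq]; norm_num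
      rw [hC2z, hkz]
      ring
  have hC1eq : C1 = C * k / n := by
    field_simp
    linarith [hA]
  have hC2eq : C2 = C * k * (k - 1) / (n * (n - 1)) := by
    rw [eq_div_iff (by positivity : n * (n-1) ≠ 0)]
    nlinarith [hA, hB]
  refine ⟨(k * (n - 1))⁻¹ * (ρ₁ * (n - k) + (k - 1) * n), le_refl _, ?_⟩
  intro x
  have hthis := hsgc1 x
  set G := gradient (fun y => n⁻¹ * ∑ i, f i y) x with hG
  set S := ∑ i : Fin N, ‖gradient (f i) x‖ ^ 2 with hSdef
  set H := ‖G‖ ^ 2 with hHdef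
  have hnpos : (0:ℝ) < n := by linarith
  have hSnn : 0 ≤ S := by
    rw [hSdef]; exact Finset.sum_nonneg fun i _ => by positivity
  have hHnn : 0 ≤ H := by rw [hHdef]; positivity
  have hSle : S ≤ n * ρ₁ * H := by
    calc S = n * (n⁻¹ * S) := by field_simp
    _ ≤ n * (ρ₁ * H) := mul_le_mul_of_nonneg_left hthis (le_of_lt hnpos)
    _ = n * ρ₁ * H := by ring
  have hGr : G = n⁻¹ • ∑ i, gradient (f i) x := by
    have h0 : ∀ i, HasFDerivAt (f i)
        (InnerProductSpace.toDual ℝ (EuclideanSpace ℝ (Fin d)) (gradient (f i) x)) x :=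
      fun i => ((hdiff i).differentiableAt.hasGradientAt).hasFDerivAt
    have hF : HasFDerivAt (fun y => n⁻¹ * ∑ i, f i y)
        (n⁻¹ • ∑ i, InnerProductSpace.toDual ℝ (EuclideanSpace ℝ (Fin d))
          (gradient (f i) x)) x :=
      (HasFDerivAt.fun_sum (fun i (_ : i ∈ Finset.univ) => h0 i)).const_mul _
    have heq : (InnerProductSpace.toDual ℝ (EuclideanSpace ℝ (Fin d)))
        (n⁻¹ • ∑ i, gradient (f i) x)
          = n⁻¹ • ∑ i, InnerProductSpace.toDual ℝ (EuclideanSpace ℝ (Fin d))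
            (gradient (f i) x) := by
      simp [map_sum]
    have hgrad : HasGradientAt (fun y => n⁻¹ * ∑ i, f i y)
        (n⁻¹ • ∑ i, gradient (f i) x) x := by
      rw [hasGradientAt_iff_hasFDerivAt, heq]
      exact hF
    rw [hG]
    exact hgrad.gradient
  have hsumg : ‖∑ i, gradient (f i) x‖ ^ 2 = n ^ 2 * H := by
    have h5 : ∑ i, gradient (f i) x = n • G := by
      rw [hGr, smul_smul]
      field_simp
      rw [one_smul]
    rw [h5, norm_smul]
    simp only [Real.norm_eq_abs]
    rw [abs_of_nonneg (le_of_lt hnpos), hHdef]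
    ring
  have hident := sgc_identity hK1 hKN (fun i => gradient (f i) x)
  rw [← hSdef, ← hC1def, ← hC2def, hsumg] at hident
  have hsmul : ∀ B : Finset (Fin N), ‖k⁻¹ • ∑ i ∈ B, gradient (f i) x‖ ^ 2
      = k⁻¹ ^ 2 * ‖∑ i ∈ B, gradient (f i) x‖ ^ 2 := by
    intro B
    rw [norm_smul]
    simp only [Real.norm_eq_abs]
    rw [abs_of_nonneg (inv_nonneg.mpr (by linarith : (0:ℝ) ≤ k))]
    ring
  calc C⁻¹ * ∑ B ∈ Finset.powersetCard K (Finset.univ : Finset (Fin N)),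
        ‖k⁻¹ • ∑ i ∈ B, gradient (f i) x‖ ^ 2
      = C⁻¹ * (k⁻¹ ^ 2 * ∑ B ∈ Finset.powersetCard K (Finset.univ : Finset (Fin N)),
          ‖∑ i ∈ B, gradient (f i) x‖ ^ 2) := by
        congr 1
        rw [Finset.mul_sum]
        exact Finset.sum_congr rfl fun B _ => hsmul B
    _ = C⁻¹ * (k⁻¹ ^ 2 * (C1 * S + C2 * (n ^ 2 * H - S))) := by rw [hident]
    _ = (n - k) / (k * n * (n - 1)) * S + ((k - 1) * n) / (k * (n - 1)) * H := by
        rw [hC1eq, hC2eq]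
        field_simp
        ring
    _ ≤ (n - k) / (k * n * (n - 1)) * (n * ρ₁ * H) + ((k - 1) * n) / (k * (n - 1)) * H := by
        refine add_le_add ?_ le_rfl
        apply mul_le_mul_of_nonneg_left hSle
        apply div_nonneg (by linarith)
        nlinarith [hk1, hn2]
    _ = (k * (n - 1))⁻¹ * (ρ₁ * (n - k) + (k - 1) * n) * H := by
        field_simp
end

section
/- Let f = (1/N)∑_{i=1}^N f_i with 1 ≤ K < N. If the strong growth condition holds with constant ρ_K for batch size K, then the strong growth condition holds for batch size 1 with constant ρ_1 ≤ (Kρ_K(N−1) − N(K−1))/(N−K). -/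
open Finset RealInnerProductSpace

lemma count_mem {N K : ℕ} (hK : 1 ≤ K) (i : Fin N) :
    (((Finset.powersetCard K (Finset.univ : Finset (Fin N)))).filter (fun B => i ∈ B ∧ i ∈ B)).card
      = (N - 1).choose (K - 1) := by
  have h : (((Finset.powersetCard K (Finset.univ : Finset (Fin N)))).filter
        (fun B => i ∈ B ∧ i ∈ B)).card
      = (Finset.powersetCard (K - 1) ((Finset.univ : Finset (Fin N)).erase i)).card := by
    apply Finset.card_nbij' (fun B => B.erase i) (fun C => insert i C)
    · intro B hB
      simp only [Finset.mem_coe, Finset.mem_filter, Finset.mem_powersetCard, and_self] at hB ⊢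
      obtain ⟨⟨hsub, hcard⟩, hi⟩ := hB
      exact ⟨Finset.erase_subset_erase _ hsub, by rw [Finset.card_erase_of_mem hi, hcard]⟩
    · intro C hC
      simp only [Finset.mem_coe, Finset.mem_filter, Finset.mem_powersetCard] at hC ⊢
      obtain ⟨hsub, hcard⟩ := hC
      have hiC : i ∉ C := fun h => (Finset.mem_erase.1 (hsub h)).1 rfl
      refine ⟨⟨Finset.subset_univ _, ?_⟩, Finset.mem_insert_self _ _, Finset.mem_insert_self _ _⟩
      rw [Finset.card_insert_of_notMem hiC, hcard]
      omega
    · intro B hB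
      simp only [Finset.mem_coe, Finset.mem_filter, and_self] at hB
      exact Finset.insert_erase hB.2
    · intro C hC
      have hiC : i ∉ C := fun h =>
        (Finset.mem_erase.1 ((Finset.mem_powersetCard.1 hC).1 h)).1 rfl
      exact Finset.erase_insert hiC
  rw [h, Finset.card_powersetCard, Finset.card_erase_of_mem (Finset.mem_univ i),
    Finset.card_univ, Fintype.card_fin]

lemma count_pair {N K : ℕ} (hK : 2 ≤ K) {i j : Fin N} (hij : i ≠ j) :
    (((Finset.powersetCard K (Finset.univ : Finset (Fin N)))).filter (fun B => i ∈ B ∧ j ∈ B)).card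
      = (N - 2).choose (K - 2) := by
  have h : (((Finset.powersetCard K (Finset.univ : Finset (Fin N)))).filter
        (fun B => i ∈ B ∧ j ∈ B)).card
      = (Finset.powersetCard (K - 2) (((Finset.univ : Finset (Fin N)).erase i).erase j)).card := by
    apply Finset.card_nbij' (fun B => (B.erase i).erase j) (fun C => insert i (insert j C))
    · intro B hB
      simp only [Finset.mem_coe, Finset.mem_filter, Finset.mem_powersetCard] at hB ⊢
      obtain ⟨⟨hsub, hcard⟩, hi, hj⟩ := hB
      have hj' : j ∈ B.erase i := Finset.mem_erase.2 ⟨fun h => hij h.symm, hj⟩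
      refine ⟨Finset.erase_subset_erase _ (Finset.erase_subset_erase _ hsub), ?_⟩
      rw [Finset.card_erase_of_mem hj', Finset.card_erase_of_mem hi, hcard]; omega
    · intro C hC
      simp only [Finset.mem_coe, Finset.mem_filter, Finset.mem_powersetCard] at hC ⊢
      obtain ⟨hsub, hcard⟩ := hC
      have hjC : j ∉ C := fun h => (Finset.mem_erase.1 (hsub h)).1 rfl
      have hiC : i ∉ C := fun h => (Finset.mem_erase.1 ((Finset.erase_subset _ _) (hsub h))).1 rfl
      have hijC : i ∉ insert j C := by
        simp only [Finset.mem_insert]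
        rintro (h | h)
        · exact hij h
        · exact hiC h
      refine ⟨⟨Finset.subset_univ _, ?_⟩, Finset.mem_insert_self _ _,
        Finset.mem_insert_of_mem (Finset.mem_insert_self _ _)⟩
      rw [Finset.card_insert_of_notMem hijC, Finset.card_insert_of_notMem hjC, hcard]
      omega
    · intro B hB
      simp only [Finset.mem_coe, Finset.mem_filter] at hB
      obtain ⟨_, hi, hj⟩ := hB
      have hj' : j ∈ B.erase i := Finset.mem_erase.2 ⟨fun h => hij h.symm, hj⟩
      dsimp only
      rw [Finset.insert_erase hj', Finset.insert_erase hi]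
    · intro C hC
      have hsub := (Finset.mem_powersetCard.1 hC).1
      have hjC : j ∉ C := fun h => (Finset.mem_erase.1 (hsub h)).1 rfl
      have hiC : i ∉ C := fun h => (Finset.mem_erase.1 ((Finset.erase_subset _ _) (hsub h))).1 rfl
      have hijC : i ∉ insert j C := by
        simp only [Finset.mem_insert]
        rintro (h | h)
        · exact hij h
        · exact hiC h
      dsimp only
      rw [Finset.erase_insert hijC, Finset.erase_insert hjC]
  rw [h, Finset.card_powersetCard, Finset.card_erase_of_mem
      (Finset.mem_erase.2 ⟨Ne.symm hij, Finset.mem_univ j⟩),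
    Finset.card_erase_of_mem (Finset.mem_univ i), Finset.card_univ, Fintype.card_fin]; rfl

lemma count_pair_one {N : ℕ} {i j : Fin N} (hij : i ≠ j) :
    (((Finset.powersetCard 1 (Finset.univ : Finset (Fin N)))).filter
        (fun B => i ∈ B ∧ j ∈ B)).card = 0 := by
  rw [Finset.card_eq_zero, Finset.filter_eq_empty_iff]
  rintro B hB ⟨hi, hj⟩
  have hcard := (Finset.mem_powersetCard.1 hB).2
  exact hij (Finset.card_le_one.1 (le_of_eq hcard) i hi j hj)

lemma expand_sum {N K : ℕ} {E : Type*} [NormedAddCommGroup E] [InnerProductSpace ℝ E]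
    (g : Fin N → E) (c1 c2 : ℕ)
    (h1 : ∀ i : Fin N,
      (((Finset.powersetCard K (Finset.univ : Finset (Fin N)))).filter
        (fun B => i ∈ B ∧ i ∈ B)).card = c1)
    (h2 : ∀ i j : Fin N, i ≠ j →
      (((Finset.powersetCard K (Finset.univ : Finset (Fin N)))).filter
        (fun B => i ∈ B ∧ j ∈ B)).card = c2) :
    ∑ B ∈ Finset.powersetCard K (Finset.univ : Finset (Fin N)), ‖∑ i ∈ B, g i‖ ^ 2
      = (c1 : ℝ) * ∑ i, ‖g i‖ ^ 2
        + (c2 : ℝ) * (‖∑ i, g i‖ ^ 2 - ∑ i, ‖g i‖ ^ 2) := by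
  classical
  set P := Finset.powersetCard K (Finset.univ : Finset (Fin N)) with hP
  have e1 : ∀ B : Finset (Fin N), ‖∑ i ∈ B, g i‖ ^ 2
      = ∑ i : Fin N, ∑ j : Fin N, if i ∈ B ∧ j ∈ B then ⟪g i, g j⟫ else 0 := by
    intro B
    rw [← real_inner_self_eq_norm_sq, sum_inner, ← Fintype.sum_ite_mem B]
    refine Finset.sum_congr rfl fun i _ => ?_
    by_cases hi : i ∈ B
    · simp only [hi, if_true, true_and, inner_sum]
      rw [← Fintype.sum_ite_mem B]
    · simp [hi]
  calc ∑ B ∈ P, ‖∑ i ∈ B, g i‖ ^ 2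
      = ∑ B ∈ P, ∑ i : Fin N, ∑ j : Fin N, if i ∈ B ∧ j ∈ B then ⟪g i, g j⟫ else 0 :=
        Finset.sum_congr rfl fun B _ => e1 B
    _ = ∑ i : Fin N, ∑ j : Fin N, ∑ B ∈ P, if i ∈ B ∧ j ∈ B then ⟪g i, g j⟫ else 0 := by
        rw [Finset.sum_comm]
        exact Finset.sum_congr rfl fun i _ => Finset.sum_comm
    _ = ∑ i : Fin N, ∑ j : Fin N,
          ((P.filter (fun B => i ∈ B ∧ j ∈ B)).card : ℝ) * ⟪g i, g j⟫ := by
        refine Finset.sum_congr rfl fun i _ => Finset.sum_congr rfl fun j _ => ?_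
        rw [← Finset.sum_filter, Finset.sum_const, nsmul_eq_mul]
    _ = ∑ i : Fin N, ((c1 : ℝ) * ‖g i‖ ^ 2
          + ∑ j ∈ Finset.univ.erase i, (c2 : ℝ) * ⟪g i, g j⟫) := by
        refine Finset.sum_congr rfl fun i _ => ?_
        rw [← Finset.add_sum_erase _ _ (Finset.mem_univ i), h1 i, real_inner_self_eq_norm_sq]
        congr 1
        refine Finset.sum_congr rfl fun j hj => ?_
        rw [h2 i j (Ne.symm (Finset.mem_erase.1 hj).1)]
    _ = (c1 : ℝ) * ∑ i, ‖g i‖ ^ 2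
        + (c2 : ℝ) * (‖∑ i, g i‖ ^ 2 - ∑ i, ‖g i‖ ^ 2) := by
        rw [Finset.sum_add_distrib, ← Finset.mul_sum]
        congr 1
        have hpull : ∑ x : Fin N, ∑ j ∈ Finset.univ.erase x, (c2 : ℝ) * ⟪g x, g j⟫
            = (c2 : ℝ) * ∑ x : Fin N, ∑ j ∈ Finset.univ.erase x, ⟪g x, g j⟫ := by
          simp_rw [← Finset.mul_sum]
        rw [hpull]
        congr 1
        have e3 : ∑ i : Fin N, ∑ j : Fin N, ⟪g i, g j⟫ = ‖∑ i, g i‖ ^ 2 := by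
          rw [← real_inner_self_eq_norm_sq, sum_inner]
          exact Finset.sum_congr rfl fun i _ => (inner_sum _ _ _).symm
        rw [← e3]
        rw [← Finset.sum_sub_distrib]
        refine Finset.sum_congr rfl fun i _ => ?_
        rw [← Finset.add_sum_erase _ _ (Finset.mem_univ i), real_inner_self_eq_norm_sq]
        ring

set_option maxHeartbeats 1000000 in
/-- Reciprocal of the batch-size lemma: if the strong growth condition holds with
constant `ρ_K` for batch size `K < N`, then it holds for batch size `1` with some
constant `ρ₁ ≤ (Kρ_K(N-1) - N(K-1)) / (N-K)`. -/
theorem stmt6 {d N : ℕ} (hN : 2 ≤ N) (K : ℕ) (hK1 : 1 ≤ K) (hKN : K < N)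
    (f : Fin N → EuclideanSpace ℝ (Fin d) → ℝ)
    (hdiff : ∀ i, Differentiable ℝ (f i))
    (ρK : ℝ)
    (hsgcK : ∀ x : EuclideanSpace ℝ (Fin d),
      ((N.choose K : ℝ))⁻¹ *
          ∑ B ∈ Finset.powersetCard K (Finset.univ : Finset (Fin N)),
            ‖(K : ℝ)⁻¹ • ∑ i ∈ B, gradient (f i) x‖ ^ 2
        ≤ ρK * ‖gradient (fun y => (N : ℝ)⁻¹ * ∑ i, f i y) x‖ ^ 2) :
    ∃ ρ₁ : ℝ,
      ρ₁ ≤ ((K : ℝ) * ρK * ((N : ℝ) - 1) - (N : ℝ) * ((K : ℝ) - 1)) / ((N : ℝ) - K) ∧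
      ∀ x : EuclideanSpace ℝ (Fin d),
        (N : ℝ)⁻¹ * ∑ i : Fin N, ‖gradient (f i) x‖ ^ 2
          ≤ ρ₁ * ‖gradient (fun y => (N : ℝ)⁻¹ * ∑ i, f i y) x‖ ^ 2 := by
  classical
  set n : ℝ := (N : ℝ) with hn
  set k : ℝ := (K : ℝ) with hk
  have hn2 : (2 : ℝ) ≤ n := by rw [hn]; exact_mod_cast hN
  have hk1 : (1 : ℝ) ≤ k := by rw [hk]; exact_mod_cast hK1
  have hkn : k < n := by rw [hk, hn]; exact_mod_cast hKN
  have hn0 : (0 : ℝ) < n := by linarith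
  have hk0 : (0 : ℝ) < k := by linarith
  have hnk : (0 : ℝ) < n - k := by linarith
  have hn1 : (0 : ℝ) < n - 1 := by linarith
  -- the count values
  set c1 : ℕ := (N - 1).choose (K - 1) with hc1def
  set c2 : ℕ := if 2 ≤ K then (N - 2).choose (K - 2) else 0 with hc2def
  have hA : (0 : ℝ) < (N.choose K : ℝ) := by
    exact_mod_cast Nat.choose_pos (le_of_lt hKN)
  set A : ℝ := (N.choose K : ℝ) with hAdef
  -- key Nat identities, cast to ℝ
  have idc1 : (c1 : ℝ) * n = A * k := by
    have h : N * (N - 1).choose (K - 1) = N.choose K * K := by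
      obtain ⟨N', rfl⟩ : ∃ N', N = N' + 1 := ⟨N - 1, by omega⟩
      obtain ⟨K', rfl⟩ : ∃ K', K = K' + 1 := ⟨K - 1, by omega⟩
      simpa using Nat.add_one_mul_choose_eq N' K'
    have := congrArg (fun m : ℕ => (m : ℝ)) h
    push_cast at this
    rw [hc1def, hn, hAdef, hk]
    push_cast
    linarith [this]
  have idc2 : (c2 : ℝ) * (n * (n - 1)) = A * (k * (k - 1)) := by
    by_cases hK2 : 2 ≤ K
    · have hc2' : c2 = (N - 2).choose (K - 2) := by rw [hc2def, if_pos hK2]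
      have h : (N - 1) * (N - 2).choose (K - 2) = (N - 1).choose (K - 1) * (K - 1) := by
        obtain ⟨N', rfl⟩ : ∃ N', N = N' + 2 := ⟨N - 2, by omega⟩
        obtain ⟨K', rfl⟩ : ∃ K', K = K' + 2 := ⟨K - 2, by omega⟩
        simpa using Nat.add_one_mul_choose_eq N' K'
      have hcast := congrArg (fun m : ℕ => (m : ℝ)) h
      push_cast [Nat.cast_sub (by omega : 1 ≤ N), Nat.cast_sub (by omega : 1 ≤ K)] at hcast
      rw [hc2', hn, hAdef, hk]
      have hcast2 : ((N : ℝ) - 1) * ((N - 2).choose (K - 2) : ℝ)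
          = (c1 : ℝ) * ((K : ℝ) - 1) := by
        rw [hc1def]; push_cast [Nat.cast_sub (by omega : 1 ≤ N), Nat.cast_sub (by omega : 1 ≤ K)] at hcast ⊢
        linarith [hcast]
      have := idc1
      nlinarith [hcast2, this]
    · have hc2' : c2 = 0 := by rw [hc2def, if_neg hK2]
      have hk' : K = 1 := by omega
      have : k = 1 := by rw [hk, hk']; norm_num
      rw [hc2', this]
      norm_num
  -- counting
  have hcount1 : ∀ i : Fin N,
      (((Finset.powersetCard K (Finset.univ : Finset (Fin N)))).filter
        (fun B => i ∈ B ∧ i ∈ B)).card = c1 := fun i => count_mem hK1 i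
  have hcount2 : ∀ i j : Fin N, i ≠ j →
      (((Finset.powersetCard K (Finset.univ : Finset (Fin N)))).filter
        (fun B => i ∈ B ∧ j ∈ B)).card = c2 := by
    intro i j hij
    by_cases hK2 : 2 ≤ K
    · rw [hc2def, if_pos hK2]; exact count_pair hK2 hij
    · have hKeq : K = 1 := by omega
      rw [hc2def, if_neg hK2]
      subst hKeq
      exact count_pair_one hij
  -- gradient of the average
  have hgrad : ∀ x : EuclideanSpace ℝ (Fin d),
      gradient (fun y => n⁻¹ * ∑ i, f i y) x = n⁻¹ • ∑ i, gradient (f i) x := by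
    intro x
    have hd : DifferentiableAt ℝ (fun y => ∑ i, f i y) x :=
      DifferentiableAt.fun_sum fun i _ => (hdiff i).differentiableAt
    have h1 : fderiv ℝ (fun y => n⁻¹ * ∑ i, f i y) x
        = n⁻¹ • fderiv ℝ (fun y => ∑ i, f i y) x := fderiv_const_mul hd _
    have h2 : fderiv ℝ (fun y => ∑ i, f i y) x = ∑ i, fderiv ℝ (f i) x :=
      fderiv_fun_sum fun i _ => (hdiff i).differentiableAt
    unfold gradient
    rw [h1, h2, map_smul, map_sum]
  refine ⟨(k * ρK * (n - 1) - n * (k - 1)) / (n - k), le_refl _, fun x => ?_⟩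
  have H := hsgcK x
  set g : Fin N → EuclideanSpace ℝ (Fin d) := fun i => gradient (f i) x with hg
  set T : ℝ := ∑ i, ‖g i‖ ^ 2 with hT
  set s : ℝ := ‖∑ i, g i‖ ^ 2 with hs
  have hT0 : 0 ≤ T := by rw [hT]; exact Finset.sum_nonneg fun i _ => sq_nonneg _
  have hs0 : 0 ≤ s := by rw [hs]; exact sq_nonneg _
  have hnorm : ‖gradient (fun y => n⁻¹ * ∑ i, f i y) x‖ ^ 2 = (n⁻¹) ^ 2 * s := by
    rw [hgrad x, norm_smul, mul_pow, Real.norm_eq_abs, abs_of_pos (inv_pos.2 hn0), hs]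
  have hterm : ∀ B : Finset (Fin N),
      ‖k⁻¹ • ∑ i ∈ B, g i‖ ^ 2 = (k⁻¹) ^ 2 * ‖∑ i ∈ B, g i‖ ^ 2 := by
    intro B
    rw [norm_smul, mul_pow, Real.norm_eq_abs, abs_of_pos (inv_pos.2 hk0)]
  have hsum : (∑ B ∈ Finset.powersetCard K (Finset.univ : Finset (Fin N)),
        ‖k⁻¹ • ∑ i ∈ B, g i‖ ^ 2)
      = (k⁻¹) ^ 2 * ((c1 : ℝ) * T + (c2 : ℝ) * (s - T)) := by
    rw [Finset.sum_congr rfl fun B _ => hterm B, ← Finset.mul_sum,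
      expand_sum g c1 c2 hcount1 hcount2, hT, hs]
  rw [hnorm, hsum] at H
  have Hfin : ((c1 : ℝ) * T + (c2 : ℝ) * (s - T)) * n ^ 2 ≤ k ^ 2 * A * ρK * s := by
    have h1 : (0 : ℝ) < A * k ^ 2 * n ^ 2 := by positivity
    have h2 := mul_le_mul_of_nonneg_left H (le_of_lt h1)
    have e : (A * k ^ 2 * n ^ 2) * (A⁻¹ * ((k⁻¹) ^ 2 * ((c1 : ℝ) * T + (c2 : ℝ) * (s - T))))
        = ((c1 : ℝ) * T + (c2 : ℝ) * (s - T)) * n ^ 2 := by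
      field_simp
    have e2 : (A * k ^ 2 * n ^ 2) * (ρK * ((n⁻¹) ^ 2 * s)) = k ^ 2 * A * ρK * s := by
      field_simp
    rw [e, e2] at h2
    exact h2
  have Hlin : n * (n - 1) * T + (k - 1) * n * (s - T) ≤ ρK * k * (n - 1) * s := by
    have h3 := mul_le_mul_of_nonneg_right Hfin (le_of_lt hn1)
    have e : ((c1 : ℝ) * T + (c2 : ℝ) * (s - T)) * n ^ 2 * (n - 1)
        = (A * k) * (n * (n - 1) * T + (k - 1) * n * (s - T)) := by
      linear_combination (n * (n - 1) * T) * idc1 + (n * (s - T)) * idc2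
    have e2 : k ^ 2 * A * ρK * s * (n - 1) = (A * k) * (ρK * k * (n - 1) * s) := by ring
    rw [e, e2] at h3
    exact le_of_mul_le_mul_left h3 (by positivity)
  have key : n * (n - k) * T ≤ (k * ρK * (n - 1) - n * (k - 1)) * s := by linarith [Hlin]
  rw [hnorm]
  calc n⁻¹ * T = (n * (n - k) * T) / (n ^ 2 * (n - k)) := by
        field_simp
    _ ≤ ((k * ρK * (n - 1) - n * (k - 1)) * s) / (n ^ 2 * (n - k)) := by
        gcongr
    _ = (k * ρK * (n - 1) - n * (k - 1)) / (n - k) * ((n⁻¹) ^ 2 * s) := by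
        apply mul_right_cancel₀ (show (n ^ 2 * (n - k)) ≠ 0 by positivity)
        field_simp
end

section
/- Let f = (1/N)∑_{i=1}^N f_i where each f_i is L_i-smooth, suppose interpolation holds (there exists x* minimizing f with x* ∈ argmin f_i for all i), and let L_(K) = max over size-K batches B of (1/K)∑_{i∈B} L_i. Then for all x, E[‖∇̃_K(x)‖²] ≤ 2 L_(K) (f(x) − f*), where f* = f(x*) and the expectation is over the uniform random batch of size K. -/
open Finset RealInnerProductSpace intervalIntegral

section Aux

variable {F : Type*} [NormedAddCommGroup F] [InnerProductSpace ℝ F] [CompleteSpace F]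

lemma my_descent (g : F → ℝ) (grad : F → F) (l : ℝ)
    (hg : ∀ z, HasGradientAt g (grad z) z)
    (hlip : ∀ u v, ‖grad u - grad v‖ ≤ l * ‖u - v‖) (x y : F) :
    g y ≤ g x + ⟪grad x, y - x⟫ + l / 2 * ‖y - x‖ ^ 2 := by
  set u := y - x with hu
  have hgc : Continuous grad := by
    refine (LipschitzWith.of_dist_le_mul (K := Real.toNNReal l) fun a b => ?_).continuous
    rw [dist_eq_norm, dist_eq_norm]
    exact (hlip a b).trans (mul_le_mul_of_nonneg_right (Real.le_coe_toNNReal l) (norm_nonneg _))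
  have hcont : Continuous fun t : ℝ => ⟪grad (x + t • u), u⟫ :=
    (hgc.comp (by continuity)).inner continuous_const
  have hc : ∀ t : ℝ, HasDerivAt (fun s : ℝ => g (x + s • u)) ⟪grad (x + t • u), u⟫ t := by
    intro t
    have h1 : HasDerivAt (fun s : ℝ => x + s • u) u t := by
      simpa using ((hasDerivAt_id t).smul_const u).const_add x
    have h2 : HasFDerivAt g ((InnerProductSpace.toDual ℝ F) (grad (x + t • u))) (x + t • u) :=
      hasGradientAt_iff_hasFDerivAt.mp (hg (x + t • u))
    have := h2.comp_hasDerivAt t h1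
    simpa [InnerProductSpace.toDual_apply_apply, real_inner_comm, Function.comp_def] using this
  have hFTC : ∫ t in (0:ℝ)..1, ⟪grad (x + t • u), u⟫ = g y - g x := by
    have := intervalIntegral.integral_eq_sub_of_hasDerivAt (f := fun s : ℝ => g (x + s • u))
      (fun t _ => hc t) (hcont.intervalIntegrable 0 1)
    simpa [hu] using this
  have hmono : ∫ t in (0:ℝ)..1, ⟪grad (x + t • u), u⟫ ≤
      ∫ t in (0:ℝ)..1, (⟪grad x, u⟫ + (l * ‖u‖ ^ 2) * t) := by
    refine intervalIntegral.integral_mono_on (by norm_num) (hcont.intervalIntegrable 0 1)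
      ((continuous_const.add (continuous_const.mul continuous_id)).intervalIntegrable 0 1)
      fun t ht => ?_
    have h1 : ⟪grad (x + t • u), u⟫ = ⟪grad x, u⟫ + ⟪grad (x + t • u) - grad x, u⟫ := by
      rw [inner_sub_left]; ring
    have h2 : ⟪grad (x + t • u) - grad x, u⟫ ≤ ‖grad (x + t • u) - grad x‖ * ‖u‖ :=
      real_inner_le_norm _ _
    have h3 : ‖grad (x + t • u) - grad x‖ ≤ l * (t * ‖u‖) := by
      have := hlip (x + t • u) x
      simpa [norm_smul, abs_of_nonneg ht.1] using this
    have h4 : ‖grad (x + t • u) - grad x‖ * ‖u‖ ≤ l * (t * ‖u‖) * ‖u‖ :=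
      mul_le_mul_of_nonneg_right h3 (norm_nonneg u)
    rw [h1]
    nlinarith [sq_nonneg ‖u‖, norm_nonneg u]
  have hval : ∫ t in (0:ℝ)..1, (⟪grad x, u⟫ + (l * ‖u‖ ^ 2) * t) =
      ⟪grad x, u⟫ + l / 2 * ‖u‖ ^ 2 := by
    rw [intervalIntegral.integral_add (intervalIntegrable_const)
      (((by fun_prop : Continuous fun t : ℝ => (l * ‖u‖ ^ 2) * t)).intervalIntegrable 0 1),
      intervalIntegral.integral_const_mul, integral_id]
    simp; ring
  rw [hval] at hmono
  linarith [hFTC ▸ hmono]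

lemma my_key (g : F → ℝ) (grad : F → F) (l : ℝ)
    (hg : ∀ z, HasGradientAt g (grad z) z)
    (hlip : ∀ u v, ‖grad u - grad v‖ ≤ l * ‖u - v‖)
    (xs : F) (hmin : ∀ y, g xs ≤ g y) (x : F) :
    ‖grad x‖ ^ 2 ≤ 2 * l * (g x - g xs) := by
  have hgs : grad xs = 0 := by
    have h0 : IsLocalMin g xs := (isMinOn_univ_iff.mpr hmin).isLocalMin Filter.univ_mem
    have := h0.hasFDerivAt_eq_zero (hasGradientAt_iff_hasFDerivAt.mp (hg xs))
    simpa using congrArg (InnerProductSpace.toDual ℝ F).symm this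
  rcases lt_or_ge 0 l with hl | hl
  · have hd := my_descent g grad l hg hlip x (x - l⁻¹ • grad x)
    have h1 : x - l⁻¹ • grad x - x = -(l⁻¹ • grad x) := by abel
    rw [h1] at hd
    have h2 : ⟪grad x, -(l⁻¹ • grad x)⟫ = -(l⁻¹ * ‖grad x‖ ^ 2) := by
      rw [inner_neg_right, real_inner_smul_right, real_inner_self_eq_norm_sq]
    have h3 : ‖-(l⁻¹ • grad x)‖ ^ 2 = l⁻¹ ^ 2 * ‖grad x‖ ^ 2 := by
      rw [norm_neg, norm_smul]
      rw [Real.norm_eq_abs, abs_of_nonneg (by positivity : (0:ℝ) ≤ l⁻¹)]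
      ring
    rw [h2, h3] at hd
    have h4 := hmin (x - l⁻¹ • grad x)
    have hlne : l ≠ 0 := ne_of_gt hl
    have : g xs ≤ g x - l⁻¹ / 2 * ‖grad x‖ ^ 2 := by
      refine h4.trans (hd.trans_eq ?_)
      field_simp
      ring
    have h6 : l * (l⁻¹ / 2 * ‖grad x‖ ^ 2) ≤ l * (g x - g xs) :=
      mul_le_mul_of_nonneg_left (by linarith) hl.le
    have h7 : l * (l⁻¹ / 2 * ‖grad x‖ ^ 2) = ‖grad x‖ ^ 2 / 2 := by
      field_simp
    linarith
  · -- l ≤ 0 : gradient is constant and zero, g is constant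
    have hconst : ∀ z, grad z = 0 := by
      intro z
      have h := hlip z xs
      have : ‖grad z - grad xs‖ ≤ 0 :=
        h.trans (mul_nonpos_of_nonpos_of_nonneg hl (norm_nonneg _))
      have : grad z = grad xs := by
        rwa [← sub_eq_zero, ← norm_le_zero_iff]
      rw [this, hgs]
    have hgconst : g x = g xs := by
      have hdiff : Differentiable ℝ g := fun z => (hg z).differentiableAt
      have hfz : ∀ z, fderiv ℝ g z = 0 := by
        intro z
        have := (hasGradientAt_iff_hasFDerivAt.mp (hg z)).fderiv
        rw [this, hconst z]
        simp
      exact is_const_of_fderiv_eq_zero hdiff hfz x xs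
    rw [hconst x, hgconst]
    simp
end Aux

lemma my_count {N K : ℕ} (hK : 1 ≤ K) (i : Fin N) :
    ((Finset.powersetCard K (Finset.univ : Finset (Fin N))).filter (fun B => i ∈ B)).card
      = (N - 1).choose (K - 1) := by
  have hb : ((Finset.powersetCard K (Finset.univ : Finset (Fin N))).filter (fun B => i ∈ B)).card
      = (Finset.powersetCard (K - 1) ((Finset.univ : Finset (Fin N)).erase i)).card := by
    refine Finset.card_bij' (fun B _ => B.erase i) (fun C _ => insert i C) ?_ ?_ ?_ ?_
    · intro B hB
      simp only [Finset.mem_filter, Finset.mem_powersetCard] at hB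
      simp only [Finset.mem_powersetCard]
      exact ⟨Finset.erase_subset_erase i hB.1.1,
        by rw [Finset.card_erase_of_mem hB.2, hB.1.2]⟩
    · intro C hC
      simp only [Finset.mem_powersetCard] at hC
      have hiC : i ∉ C := fun h => (Finset.mem_erase.mp (hC.1 h)).1 rfl
      simp only [Finset.mem_filter, Finset.mem_powersetCard]
      refine ⟨⟨Finset.subset_univ _, ?_⟩, Finset.mem_insert_self i C⟩
      rw [Finset.card_insert_of_notMem hiC, hC.2]
      omega
    · intro B hB
      simp only [Finset.mem_filter] at hB
      exact Finset.insert_erase hB.2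
    · intro C hC
      simp only [Finset.mem_powersetCard] at hC
      exact Finset.erase_insert fun h => (Finset.mem_erase.mp (hC.1 h)).1 rfl
  rw [hb, Finset.card_powersetCard, Finset.card_erase_of_mem (Finset.mem_univ i),
    Finset.card_univ, Fintype.card_fin]

lemma my_double_count {N K : ℕ} (hK : 1 ≤ K) (a : Fin N → ℝ) :
    ∑ B ∈ Finset.powersetCard K (Finset.univ : Finset (Fin N)), ∑ i ∈ B, a i
      = ((N - 1).choose (K - 1) : ℝ) * ∑ i, a i := by
  calc ∑ B ∈ Finset.powersetCard K (Finset.univ : Finset (Fin N)), ∑ i ∈ B, a i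
      = ∑ B ∈ Finset.powersetCard K (Finset.univ : Finset (Fin N)),
          ∑ i : Fin N, if i ∈ B then a i else 0 := by
        refine Finset.sum_congr rfl fun B _ => ?_
        rw [Finset.sum_ite_mem]
        congr 1
        simp
    _ = ∑ i : Fin N, ∑ B ∈ Finset.powersetCard K (Finset.univ : Finset (Fin N)),
          if i ∈ B then a i else 0 := Finset.sum_comm
    _ = ∑ i : Fin N, ((N - 1).choose (K - 1) : ℝ) * a i := by
        refine Finset.sum_congr rfl fun i _ => ?_
        rw [Finset.sum_ite, Finset.sum_const, Finset.sum_const, my_count hK i]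
        simp [mul_comm]
    _ = ((N - 1).choose (K - 1) : ℝ) * ∑ i, a i := by rw [Finset.mul_sum]

/-- Under smoothness of each `fᵢ` and interpolation, the expected squared norm of the
batch gradient estimator is bounded by `2 L_(K) (f(x) - f*)`, where `L_(K)` is the
maximal average smoothness constant over batches of size `K`. -/
theorem stmt9 {d N : ℕ} (hN : 1 ≤ N) (K : ℕ) (hK : 1 ≤ K) (hKN : K ≤ N)
    (f : Fin N → EuclideanSpace ℝ (Fin d) → ℝ)
    (L : Fin N → ℝ)
    (hdiff : ∀ i, Differentiable ℝ (f i))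
    (hlip : ∀ i, ∀ x y : EuclideanSpace ℝ (Fin d),
      ‖gradient (f i) x - gradient (f i) y‖ ≤ L i * ‖x - y‖)
    (xstar : EuclideanSpace ℝ (Fin d))
    (hminf : ∀ y, (N : ℝ)⁻¹ * ∑ i, f i xstar ≤ (N : ℝ)⁻¹ * ∑ i, f i y)
    (hinterp : ∀ i, ∀ y, f i xstar ≤ f i y)
    (LK : ℝ)
    (hLK : IsGreatest
      {l : ℝ | ∃ B ∈ Finset.powersetCard K (Finset.univ : Finset (Fin N)),
        l = (K : ℝ)⁻¹ * ∑ i ∈ B, L i} LK) :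
    ∀ x : EuclideanSpace ℝ (Fin d),
      ((N.choose K : ℝ))⁻¹ *
          ∑ B ∈ Finset.powersetCard K (Finset.univ : Finset (Fin N)),
            ‖(K : ℝ)⁻¹ • ∑ i ∈ B, gradient (f i) x‖ ^ 2
        ≤ 2 * LK * ((N : ℝ)⁻¹ * ∑ i, f i x - (N : ℝ)⁻¹ * ∑ i, f i xstar) := by
  intro x
  have hKr : (0:ℝ) < (K:ℝ) := by exact_mod_cast hK
  have hNr : (0:ℝ) < (N:ℝ) := by exact_mod_cast hN
  set S := Finset.powersetCard K (Finset.univ : Finset (Fin N)) with hS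
  -- pointwise bound over batches
  have key : ∀ B ∈ S,
      ‖(K : ℝ)⁻¹ • ∑ i ∈ B, gradient (f i) x‖ ^ 2 ≤
        2 * LK * ((K : ℝ)⁻¹ * ∑ i ∈ B, (f i x - f i xstar)) := by
    intro B hB
    set g : EuclideanSpace ℝ (Fin d) → ℝ := fun y => (K:ℝ)⁻¹ * ∑ i ∈ B, f i y with hgdef
    set grad : EuclideanSpace ℝ (Fin d) → EuclideanSpace ℝ (Fin d) :=
      fun y => (K:ℝ)⁻¹ • ∑ i ∈ B, gradient (f i) y with hgraddef
    set lB : ℝ := (K:ℝ)⁻¹ * ∑ i ∈ B, L i with hlBdef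
    have hg : ∀ z, HasGradientAt g (grad z) z := by
      intro z
      rw [hasGradientAt_iff_hasFDerivAt]
      have h1 : HasFDerivAt (fun y => ∑ i ∈ B, f i y)
          (∑ i ∈ B, (InnerProductSpace.toDual ℝ (EuclideanSpace ℝ (Fin d)))
            (gradient (f i) z)) z :=
        HasFDerivAt.fun_sum fun i _ =>
          hasGradientAt_iff_hasFDerivAt.mp ((hdiff i z).hasGradientAt)
      have h2 := h1.const_mul ((K:ℝ)⁻¹)
      convert h2 using 1
      · rfl
      simp [hgraddef, map_smul, map_sum]
    have hlipB : ∀ u v, ‖grad u - grad v‖ ≤ lB * ‖u - v‖ := by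
      intro u v
      have h1 : grad u - grad v
          = (K:ℝ)⁻¹ • ∑ i ∈ B, (gradient (f i) u - gradient (f i) v) := by
        simp [hgraddef, smul_sub, Finset.sum_sub_distrib]
      rw [h1, norm_smul]
      have h2 : ‖∑ i ∈ B, (gradient (f i) u - gradient (f i) v)‖
          ≤ ∑ i ∈ B, L i * ‖u - v‖ :=
        (norm_sum_le _ _).trans (Finset.sum_le_sum fun i _ => hlip i u v)
      have h3 : ‖(K:ℝ)⁻¹‖ = (K:ℝ)⁻¹ := by
        rw [Real.norm_eq_abs, abs_of_nonneg (by positivity)]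
      rw [h3]
      calc (K:ℝ)⁻¹ * ‖∑ i ∈ B, (gradient (f i) u - gradient (f i) v)‖
          ≤ (K:ℝ)⁻¹ * ∑ i ∈ B, L i * ‖u - v‖ :=
            mul_le_mul_of_nonneg_left h2 (by positivity)
        _ = lB * ‖u - v‖ := by rw [← Finset.sum_mul, hlBdef]; ring
    have hminB : ∀ y, g xstar ≤ g y := fun y =>
      mul_le_mul_of_nonneg_left (Finset.sum_le_sum fun i _ => hinterp i y) (by positivity)
    have hkey := my_key g grad lB hg hlipB xstar hminB x
    have hlBLK : lB ≤ LK := hLK.2 ⟨B, hB, rfl⟩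
    have hnn : 0 ≤ g x - g xstar := sub_nonneg.mpr (hminB x)
    have hmono : 2 * lB * (g x - g xstar) ≤ 2 * LK * (g x - g xstar) := by nlinarith
    have hgd : g x - g xstar = (K:ℝ)⁻¹ * ∑ i ∈ B, (f i x - f i xstar) := by
      simp [hgdef, Finset.sum_sub_distrib, mul_sub]
    calc ‖(K : ℝ)⁻¹ • ∑ i ∈ B, gradient (f i) x‖ ^ 2 = ‖grad x‖ ^ 2 := rfl
      _ ≤ 2 * lB * (g x - g xstar) := hkey
      _ ≤ 2 * LK * (g x - g xstar) := hmono
      _ = 2 * LK * ((K:ℝ)⁻¹ * ∑ i ∈ B, (f i x - f i xstar)) := by rw [hgd]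
  -- sum the pointwise bound
  set C : ℝ := (N.choose K : ℝ) with hC
  set M : ℝ := ((N - 1).choose (K - 1) : ℝ) with hM
  set T : ℝ := ∑ i, (f i x - f i xstar) with hT
  have hCpos : (0:ℝ) < C := by
    rw [hC]; exact_mod_cast Nat.choose_pos hKN
  have hid : (N:ℝ) * M = C * K := by
    have h0 := Nat.add_one_mul_choose_eq (N - 1) (K - 1)
    have h1 : N - 1 + 1 = N := by omega
    have h2 : K - 1 + 1 = K := by omega
    rw [h1, h2] at h0
    rw [hM, hC]
    exact_mod_cast h0
  have hsum := Finset.sum_le_sum key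
  have hmul := mul_le_mul_of_nonneg_left hsum (by positivity : (0:ℝ) ≤ C⁻¹)
  refine hmul.trans_eq ?_
  have hdc : ∑ B ∈ S, ∑ i ∈ B, (f i x - f i xstar) = M * T :=
    my_double_count hK _
  have hrw : ∑ B ∈ S, 2 * LK * ((K:ℝ)⁻¹ * ∑ i ∈ B, (f i x - f i xstar))
      = 2 * LK * ((K:ℝ)⁻¹ * (M * T)) := by
    rw [← Finset.mul_sum, ← Finset.mul_sum, hdc]
  rw [hrw]
  have hTeq : (N : ℝ)⁻¹ * ∑ i, f i x - (N : ℝ)⁻¹ * ∑ i, f i xstar = (N:ℝ)⁻¹ * T := by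
    rw [hT, Finset.sum_sub_distrib]; ring
  rw [hTeq]
  have hcoef : C⁻¹ * ((K:ℝ)⁻¹ * M) = (N:ℝ)⁻¹ := by
    field_simp
    linarith [hid]
  linear_combination (2 * LK * T) * hcoef
end

section
/- Let f = (1/N)∑ f_i be μ-strongly convex with each f_i being L_i-smooth, assume interpolation holds, and let L_(K) be the maximal average smoothness constant over batches of size K. Then the variance of the batch gradient estimator satisfies E[‖∇f(x) − ∇̃_K(x)‖²] ≤ 2(L_(K) − μ)(f(x) − f*) for all x. -/
open Finset RealInnerProductSpace



variable {E : Type*} [NormedAddCommGroup E] [InnerProductSpace ℝ E] [CompleteSpace E]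

lemma vt_hasGradientAt {ι : Type*} (B : Finset ι) (f : ι → E → ℝ)
    (hdiff : ∀ i, Differentiable ℝ (f i)) (c : ℝ) (x : E) :
    HasGradientAt (fun y => c * ∑ i ∈ B, f i y) (c • ∑ i ∈ B, gradient (f i) x) x := by
  rw [hasGradientAt_iff_hasFDerivAt]
  have h1 : HasFDerivAt (fun y => ∑ i ∈ B, f i y)
      (∑ i ∈ B, InnerProductSpace.toDual ℝ E (gradient (f i) x)) x :=
    HasFDerivAt.fun_sum fun i _ => ((hdiff i x).hasGradientAt).hasFDerivAt
  have h2 := h1.const_mul c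
  convert h2 using 1
  · rfl
  rw [map_smul, map_sum]

lemma vt_hasDerivAt_line (h : E → ℝ) (hdiff : Differentiable ℝ h) (x v : E) (t : ℝ) :
    HasDerivAt (fun s : ℝ => h (x + s • v)) ⟪gradient h (x + t • v), v⟫ t := by
  have hγ : HasDerivAt (fun s : ℝ => x + s • v) v t := by
    simpa using ((hasDerivAt_id t).smul_const v).const_add x
  have hf := ((hdiff (x + t • v)).hasGradientAt).hasFDerivAt
  have := hf.comp_hasDerivAt t hγ
  rw [InnerProductSpace.toDual_apply_apply] at this
  exact this



lemma vt_descent (h : E → ℝ) (Lh : ℝ) (hdiff : Differentiable ℝ h)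
    (hlip : ∀ x y, ‖gradient h x - gradient h y‖ ≤ Lh * ‖x - y‖) (x y : E) :
    h y ≤ h x + ⟪gradient h x, y - x⟫ + Lh / 2 * ‖y - x‖ ^ 2 := by
  set v := y - x with hv
  set ψ' : ℝ → ℝ := fun t => ⟪gradient h (x + t • v), v⟫ with hψ'
  have hgc : Continuous fun t : ℝ => gradient h (x + t • v) := by
    apply LipschitzWith.continuous (K := Real.toNNReal (Lh * ‖v‖))
    apply LipschitzWith.of_dist_le_mul
    intro s t
    rw [dist_eq_norm, dist_eq_norm]
    calc ‖gradient h (x + s • v) - gradient h (x + t • v)‖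
        ≤ Lh * ‖(x + s • v) - (x + t • v)‖ := hlip _ _
      _ = (Lh * ‖v‖) * |s - t| := by
          rw [add_sub_add_left_eq_sub, ← sub_smul, norm_smul, Real.norm_eq_abs]; ring
      _ ≤ Real.toNNReal (Lh * ‖v‖) * |s - t| := by
          apply mul_le_mul_of_nonneg_right _ (abs_nonneg _)
          rw [Real.coe_toNNReal']; exact le_max_left _ _
  have hcont : Continuous ψ' := (hgc.inner continuous_const)
  have hψ : ∀ t ∈ Set.uIcc (0:ℝ) 1, HasDerivAt (fun s => h (x + s • v)) (ψ' t) t :=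
    fun t _ => vt_hasDerivAt_line h hdiff x v t
  have hint := intervalIntegral.integral_eq_sub_of_hasDerivAt hψ
    (hcont.intervalIntegrable 0 1)
  have hbound : ∀ t ∈ Set.Icc (0:ℝ) 1, ψ' t ≤ ψ' 0 + (Lh * ‖v‖ ^ 2) * t := by
    intro t ht
    have h1 : ψ' t - ψ' 0 = ⟪gradient h (x + t • v) - gradient h (x + (0:ℝ) • v), v⟫ := by
      rw [inner_sub_left]
    have h2 : ⟪gradient h (x + t • v) - gradient h (x + (0:ℝ) • v), v⟫
        ≤ ‖gradient h (x + t • v) - gradient h (x + (0:ℝ) • v)‖ * ‖v‖ :=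
      real_inner_le_norm _ _
    have h3 : ‖gradient h (x + t • v) - gradient h (x + (0:ℝ) • v)‖ ≤ Lh * (t * ‖v‖) := by
      have := hlip (x + t • v) (x + (0:ℝ) • v)
      rw [add_sub_add_left_eq_sub, ← sub_smul, sub_zero, norm_smul, Real.norm_eq_abs,
        abs_of_nonneg ht.1] at this
      exact this
    nlinarith [norm_nonneg v, mul_le_mul_of_nonneg_right h3 (norm_nonneg v)]
  have hii : IntervalIntegrable (fun t : ℝ => ψ' 0 + (Lh * ‖v‖ ^ 2) * t)
      MeasureTheory.volume 0 1 := by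
    apply Continuous.intervalIntegrable; continuity
  have hii2 : IntervalIntegrable (fun t : ℝ => (Lh * ‖v‖ ^ 2) * t)
      MeasureTheory.volume 0 1 := by
    apply Continuous.intervalIntegrable; continuity
  have hmono := intervalIntegral.integral_mono_on (by norm_num : (0:ℝ) ≤ 1)
    (hcont.intervalIntegrable 0 1) hii hbound
  have hrhs : ∫ t in (0:ℝ)..1, (ψ' 0 + (Lh * ‖v‖ ^ 2) * t) = ψ' 0 + Lh * ‖v‖ ^ 2 / 2 := by
    rw [intervalIntegral.integral_add intervalIntegrable_const hii2,
      intervalIntegral.integral_const, intervalIntegral.integral_const_mul]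
    simp [integral_id]
    ring
  have h10 : x + (1:ℝ) • v = y := by rw [one_smul, hv]; abel
  have h00 : x + (0:ℝ) • v = x := by rw [zero_smul, add_zero]
  rw [h10, h00] at hint
  have hψ0 : ψ' 0 = ⟪gradient h x, v⟫ := by rw [hψ']; simp
  rw [hint, hrhs, hψ0] at hmono
  nlinarith [hmono]



lemma vt_sc_grad (F : E → ℝ) (μ : ℝ) (hdiff : Differentiable ℝ F)
    (hsc : StrongConvexOn Set.univ μ F) (x y : E) :
    F x + ⟪gradient F x, y - x⟫ + μ / 2 * ‖y - x‖ ^ 2 ≤ F y := by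
  have key : ∀ t : ℝ, t ∈ Set.Ioo (0:ℝ) 1 →
      (F (x + t • (y - x)) - F x) / t ≤ F y - F x - (1 - t) * (μ / 2 * ‖y - x‖ ^ 2) := by
    intro t ht
    have h2 := hsc.2 (Set.mem_univ y) (Set.mem_univ x) ht.1.le (by linarith [ht.2] : (0:ℝ) ≤ 1 - t)
      (by ring)
    have hpt : t • y + (1 - t) • x = x + t • (y - x) := by
      module
    rw [hpt] at h2
    beta_reduce at h2
    simp only [smul_eq_mul] at h2
    have ht0 : (0:ℝ) < t := ht.1
    rw [div_le_iff₀ ht0]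
    nlinarith [h2]
  have hder := vt_hasDerivAt_line F hdiff x (y - x) 0
  rw [zero_smul, add_zero] at hder
  have hslope : Filter.Tendsto (fun t : ℝ => (F (x + t • (y - x)) - F x) / t)
      (nhdsWithin 0 (Set.Ioi 0)) (nhds ⟪gradient F x, y - x⟫) := by
    have := hder.hasDerivWithinAt (s := Set.Ioi (0:ℝ))
    have h3 := (hasDerivWithinAt_iff_tendsto_slope).1 this
    have h4 : Filter.Tendsto (slope (fun s : ℝ => F (x + s • (y - x))) 0)
        (nhdsWithin 0 (Set.Ioi 0)) (nhds ⟪gradient F x, y - x⟫) := by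
      apply h3.mono_left
      apply nhdsWithin_mono
      intro s hs
      exact ⟨hs, ne_of_gt hs⟩
    apply h4.congr'
    filter_upwards [self_mem_nhdsWithin] with s hs
    rw [slope_def_field]
    simp [zero_smul]
  have hlim2 : Filter.Tendsto (fun t : ℝ => F y - F x - (1 - t) * (μ / 2 * ‖y - x‖ ^ 2))
      (nhdsWithin 0 (Set.Ioi 0)) (nhds (F y - F x - μ / 2 * ‖y - x‖ ^ 2)) := by
    have : Continuous (fun t : ℝ => F y - F x - (1 - t) * (μ / 2 * ‖y - x‖ ^ 2)) := by continuity
    have h9 := (this.tendsto 0).mono_left (nhdsWithin_le_nhds (s := Set.Ioi (0:ℝ)))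
    simpa using h9
  have hineq := le_of_tendsto_of_tendsto hslope hlim2 ?_
  · linarith [hineq]
  · filter_upwards [Ioo_mem_nhdsGT_of_mem (Set.mem_Ico.2 ⟨le_refl 0, zero_lt_one⟩)] with t ht
    exact key t ht

lemma vt_grad_sq_le (h : E → ℝ) (Lh : ℝ) (hL : 0 ≤ Lh) (hdiff : Differentiable ℝ h)
    (hlip : ∀ x y, ‖gradient h x - gradient h y‖ ≤ Lh * ‖x - y‖) (xs : E)
    (hmin : ∀ y, h xs ≤ h y)
    (hdescent : ∀ x y : E, h y ≤ h x + ⟪gradient h x, y - x⟫ + Lh / 2 * ‖y - x‖ ^ 2)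
    (x : E) : ‖gradient h x‖ ^ 2 ≤ 2 * Lh * (h x - h xs) := by
  by_cases hg : gradient h x = 0
  · rw [hg]
    have h1 := hmin x
    simp only [norm_zero]
    nlinarith [mul_nonneg hL (sub_nonneg.2 h1)]
  · have hloc : IsLocalMin h xs := Filter.Eventually.of_forall hmin
    have hgs : gradient h xs = 0 := by
      simp [gradient, hloc.fderiv_eq_zero]
    have hc := hlip x xs
    rw [hgs, sub_zero] at hc
    have hgpos : 0 < ‖gradient h x‖ := norm_pos_iff.2 hg
    have hLpos : 0 < Lh := by nlinarith [norm_nonneg (x - xs)]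
    set g := gradient h x with hgdef
    have hd := hdescent x (x - Lh⁻¹ • g)
    have he1 : (x - Lh⁻¹ • g) - x = -(Lh⁻¹ • g) := by abel
    rw [he1] at hd
    rw [inner_neg_right, real_inner_smul_right, real_inner_self_eq_norm_sq, norm_neg,
      norm_smul, Real.norm_eq_abs, abs_of_nonneg (inv_nonneg.2 hLpos.le)] at hd
    have hm := hmin (x - Lh⁻¹ • g)
    have hLne : Lh ≠ 0 := ne_of_gt hLpos
    have key : h xs ≤ h x - Lh⁻¹ * ‖g‖ ^ 2 + Lh / 2 * (Lh⁻¹ * ‖g‖) ^ 2 := le_trans hm hd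
    have expand : Lh / 2 * (Lh⁻¹ * ‖g‖) ^ 2 = ‖g‖ ^ 2 / (2 * Lh) := by
      field_simp
    rw [expand] at key
    have h5 : Lh⁻¹ * ‖g‖ ^ 2 - ‖g‖ ^ 2 / (2 * Lh) = ‖g‖ ^ 2 / (2 * Lh) := by
      field_simp; ring
    have h6 : ‖g‖ ^ 2 / (2 * Lh) ≤ h x - h xs := by linarith
    rw [div_le_iff₀ (by positivity : (0:ℝ) < 2 * Lh)] at h6
    linarith


lemma vt_card_filter {N K : ℕ} (hK : 1 ≤ K) (i : Fin N) :
    ((powersetCard K (univ : Finset (Fin N))).filter (fun B => i ∈ B)).card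
      = (N - 1).choose (K - 1) := by
  have h : ((powersetCard K (univ : Finset (Fin N))).filter (fun B => i ∈ B)).card
      = (powersetCard (K - 1) ((univ : Finset (Fin N)).erase i)).card := by
    apply Finset.card_bij' (fun B _ => B.erase i) (fun C _ => insert i C)
    · intro B hB
      rw [mem_filter] at hB
      exact insert_erase hB.2
    · intro C hC
      rw [mem_powersetCard] at hC
      exact erase_insert (fun hi => (notMem_erase i _) (hC.1 hi))
    · intro B hB
      rw [mem_filter, mem_powersetCard] at hB
      rw [mem_powersetCard]
      exact ⟨erase_subset_erase i hB.1.1, by rw [card_erase_of_mem hB.2, hB.1.2]⟩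
    · intro C hC
      rw [mem_powersetCard] at hC
      have hiC : i ∉ C := fun hi => (notMem_erase i _) (hC.1 hi)
      rw [mem_filter, mem_powersetCard]
      refine ⟨⟨subset_univ _, ?_⟩, mem_insert_self i C⟩
      rw [card_insert_of_notMem hiC, hC.2]
      omega
  rw [h, card_powersetCard, card_erase_of_mem (mem_univ i), card_univ, Fintype.card_fin]

lemma vt_sum_swap {N K : ℕ} (hK : 1 ≤ K) {V : Type*} [AddCommMonoid V] (a : Fin N → V) :
    ∑ B ∈ powersetCard K (univ : Finset (Fin N)), ∑ i ∈ B, a i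
      = (N - 1).choose (K - 1) • ∑ i, a i := by
  calc ∑ B ∈ powersetCard K (univ : Finset (Fin N)), ∑ i ∈ B, a i
      = ∑ B ∈ powersetCard K (univ : Finset (Fin N)), ∑ i : Fin N,
          if i ∈ B then a i else 0 := by
        refine sum_congr rfl fun B hB => ?_
        rw [sum_ite_mem, univ_inter]
    _ = ∑ i : Fin N, ∑ B ∈ powersetCard K (univ : Finset (Fin N)),
          if i ∈ B then a i else 0 := sum_comm
    _ = ∑ i : Fin N,
          ((powersetCard K (univ : Finset (Fin N))).filter (fun B => i ∈ B)).card • a i := by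
        refine sum_congr rfl fun i _ => ?_
        rw [← sum_filter, sum_const]
    _ = (N - 1).choose (K - 1) • ∑ i, a i := by
        rw [smul_sum]
        exact sum_congr rfl fun i _ => by rw [vt_card_filter hK]

lemma vt_avg {N K : ℕ} (hN : 1 ≤ N) (hK : 1 ≤ K) (hKN : K ≤ N)
    {V : Type*} [AddCommGroup V] [Module ℝ V] (a : Fin N → V) :
    ((N.choose K : ℝ))⁻¹ • ∑ B ∈ powersetCard K (univ : Finset (Fin N)),
        (K : ℝ)⁻¹ • ∑ i ∈ B, a i
      = (N : ℝ)⁻¹ • ∑ i, a i := by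
  rw [← smul_sum, vt_sum_swap hK, ← Nat.cast_smul_eq_nsmul ℝ, smul_smul, smul_smul]
  congr 1
  have hid : N * (N - 1).choose (K - 1) = N.choose K * K := by
    have h1 := Nat.add_one_mul_choose_eq (N - 1) (K - 1)
    have h2 : N - 1 + 1 = N := by omega
    have h3 : K - 1 + 1 = K := by omega
    rw [h2, h3] at h1
    omega
  have hM : 0 < N.choose K := Nat.choose_pos hKN
  have hNc : ((N : ℝ)) ≠ 0 := Nat.cast_ne_zero.2 (by omega)
  have hKc : ((K : ℝ)) ≠ 0 := Nat.cast_ne_zero.2 (by omega)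
  have hMc : ((N.choose K : ℝ)) ≠ 0 := Nat.cast_ne_zero.2 (by omega)
  have hidR : (N : ℝ) * ((N - 1).choose (K - 1) : ℝ) = (N.choose K : ℝ) * K := by
    exact_mod_cast congrArg (Nat.cast : ℕ → ℝ) hid
  field_simp
  linarith [hidR]
set_option maxHeartbeats 1000000 in
/-- Variance transfer: if `f = (1/N) ∑ fᵢ` is `μ`-strongly convex, each `fᵢ` is
`Lᵢ`-smooth and interpolation holds, then the variance of the batch gradient estimator
is bounded by `2 (L_(K) - μ)(f(x) - f*)`. -/
theorem stmt10 {d N : ℕ} (hN : 1 ≤ N) (K : ℕ) (hK : 1 ≤ K) (hKN : K ≤ N)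
    (f : Fin N → EuclideanSpace ℝ (Fin d) → ℝ)
    (L : Fin N → ℝ) (μ : ℝ) (hμ : 0 < μ)
    (hdiff : ∀ i, Differentiable ℝ (f i))
    (hlip : ∀ i, ∀ x y : EuclideanSpace ℝ (Fin d),
      ‖gradient (f i) x - gradient (f i) y‖ ≤ L i * ‖x - y‖)
    (hsc : StrongConvexOn Set.univ μ (fun y : EuclideanSpace ℝ (Fin d) =>
      (N : ℝ)⁻¹ * ∑ i, f i y))
    (xstar : EuclideanSpace ℝ (Fin d))
    (hminf : ∀ y, (N : ℝ)⁻¹ * ∑ i, f i xstar ≤ (N : ℝ)⁻¹ * ∑ i, f i y)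
    (hinterp : ∀ i, ∀ y, f i xstar ≤ f i y)
    (LK : ℝ)
    (hLK : IsGreatest
      {l : ℝ | ∃ B ∈ Finset.powersetCard K (Finset.univ : Finset (Fin N)),
        l = (K : ℝ)⁻¹ * ∑ i ∈ B, L i} LK) :
    ∀ x : EuclideanSpace ℝ (Fin d),
      ((N.choose K : ℝ))⁻¹ *
          ∑ B ∈ Finset.powersetCard K (Finset.univ : Finset (Fin N)),
            ‖gradient (fun y => (N : ℝ)⁻¹ * ∑ i, f i y) x -
              (K : ℝ)⁻¹ • ∑ i ∈ B, gradient (f i) x‖ ^ 2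
        ≤ 2 * (LK - μ) * ((N : ℝ)⁻¹ * ∑ i, f i x - (N : ℝ)⁻¹ * ∑ i, f i xstar) := by
  intro x
  rcases Nat.eq_zero_or_pos d with hd | hd
  · subst hd
    have hz : ∀ z : EuclideanSpace ℝ (Fin 0), z = 0 := fun z => by ext i; exact i.elim0
    have hx : x = xstar := by rw [hz x, hz xstar]
    have h1 : ∀ B ∈ Finset.powersetCard K (Finset.univ : Finset (Fin N)),
        ‖gradient (fun y => (N : ℝ)⁻¹ * ∑ i, f i y) x -
          (K : ℝ)⁻¹ • ∑ i ∈ B, gradient (f i) x‖ ^ 2 = (0:ℝ) := by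
      intro B _
      rw [hz (gradient (fun y => (N : ℝ)⁻¹ * ∑ i, f i y) x -
        (K : ℝ)⁻¹ • ∑ i ∈ B, gradient (f i) x)]
      simp
    rw [Finset.sum_congr rfl h1, Finset.sum_const, hx]
    simp
  -- main case: d ≥ 1
  have hLnonneg : ∀ i, 0 ≤ L i := by
    intro i
    have h1 := hlip i (EuclideanSpace.single ⟨0, hd⟩ (1:ℝ)) 0
    rw [sub_zero, EuclideanSpace.norm_single, norm_one, mul_one] at h1
    exact le_trans (norm_nonneg _) h1
  set pc := Finset.powersetCard K (Finset.univ : Finset (Fin N)) with hpc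
  set M := N.choose K with hMdef
  have hMpos : 0 < M := Nat.choose_pos hKN
  have hMne : ((M:ℝ)) ≠ 0 := Nat.cast_ne_zero.2 (by omega)
  have hKnn : (0:ℝ) ≤ (K:ℝ)⁻¹ := by positivity
  -- gradient of the full objective
  have hgFx : gradient (fun y => (N : ℝ)⁻¹ * ∑ i, f i y) x
      = (N:ℝ)⁻¹ • ∑ i, gradient (f i) x :=
    (vt_hasGradientAt Finset.univ f hdiff ((N:ℝ)⁻¹) x).gradient
  set g := (N:ℝ)⁻¹ • ∑ i, gradient (f i) x with hgdef
  -- unbiasedness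
  have hunb : (M:ℝ)⁻¹ • ∑ B ∈ pc, (K:ℝ)⁻¹ • ∑ i ∈ B, gradient (f i) x = g :=
    vt_avg hN hK hKN (fun i => gradient (f i) x)
  have hsumgB : ∑ B ∈ pc, (K:ℝ)⁻¹ • ∑ i ∈ B, gradient (f i) x = (M:ℝ) • g := by
    rw [← hunb, smul_smul, mul_inv_cancel₀ hMne, one_smul]
  -- variance identity
  have hvar : ∑ B ∈ pc, ‖g - (K:ℝ)⁻¹ • ∑ i ∈ B, gradient (f i) x‖ ^ 2
      = (∑ B ∈ pc, ‖(K:ℝ)⁻¹ • ∑ i ∈ B, gradient (f i) x‖ ^ 2) - (M:ℝ) * ‖g‖ ^ 2 := by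
    have hexp : ∀ B ∈ pc, ‖g - (K:ℝ)⁻¹ • ∑ i ∈ B, gradient (f i) x‖ ^ 2
        = ‖g‖^2 - 2 * ⟪g, (K:ℝ)⁻¹ • ∑ i ∈ B, gradient (f i) x⟫
          + ‖(K:ℝ)⁻¹ • ∑ i ∈ B, gradient (f i) x‖^2 :=
      fun B _ => norm_sub_sq_real g _
    have hcard : ((pc.card : ℕ) : ℝ) = (M:ℝ) := by
      rw [hpc, Finset.card_powersetCard, Finset.card_univ, Fintype.card_fin, hMdef]
    have hip : ⟪g, ∑ B ∈ pc, (K:ℝ)⁻¹ • ∑ i ∈ B, gradient (f i) x⟫ = (M:ℝ) * ‖g‖^2 := by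
      rw [hsumgB, real_inner_smul_right, real_inner_self_eq_norm_sq]
    rw [Finset.sum_congr rfl hexp, Finset.sum_add_distrib, Finset.sum_sub_distrib,
      Finset.sum_const, ← Finset.mul_sum, ← inner_sum, hip, nsmul_eq_mul, hcard]
    ring
  -- per-batch bound
  have hbatch : ∀ B ∈ pc, ‖(K:ℝ)⁻¹ • ∑ i ∈ B, gradient (f i) x‖^2
      ≤ 2 * LK * ((K:ℝ)⁻¹ * ∑ i ∈ B, (f i x - f i xstar)) := by
    intro B hB
    have hdiffB : Differentiable ℝ (fun y => (K:ℝ)⁻¹ * ∑ i ∈ B, f i y) := by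
      apply Differentiable.const_mul
      exact Differentiable.fun_sum fun i _ => hdiff i
    have hgradB : ∀ z, gradient (fun y => (K:ℝ)⁻¹ * ∑ i ∈ B, f i y) z
        = (K:ℝ)⁻¹ • ∑ i ∈ B, gradient (f i) z :=
      fun z => (vt_hasGradientAt B f hdiff ((K:ℝ)⁻¹) z).gradient
    have hlipB : ∀ z w, ‖gradient (fun y => (K:ℝ)⁻¹ * ∑ i ∈ B, f i y) z
        - gradient (fun y => (K:ℝ)⁻¹ * ∑ i ∈ B, f i y) w‖
        ≤ ((K:ℝ)⁻¹ * ∑ i ∈ B, L i) * ‖z - w‖ := by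
      intro z w
      rw [hgradB, hgradB, ← smul_sub, ← Finset.sum_sub_distrib, norm_smul,
        Real.norm_eq_abs, abs_of_nonneg hKnn]
      calc (K:ℝ)⁻¹ * ‖∑ i ∈ B, (gradient (f i) z - gradient (f i) w)‖
          ≤ (K:ℝ)⁻¹ * ∑ i ∈ B, (L i * ‖z - w‖) := by
            apply mul_le_mul_of_nonneg_left _ hKnn
            exact (norm_sum_le _ _).trans (Finset.sum_le_sum fun i _ => hlip i z w)
        _ = ((K:ℝ)⁻¹ * ∑ i ∈ B, L i) * ‖z - w‖ := by
            rw [← Finset.sum_mul]; ring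
    have hLBnn : (0:ℝ) ≤ (K:ℝ)⁻¹ * ∑ i ∈ B, L i :=
      mul_nonneg hKnn (Finset.sum_nonneg fun i _ => hLnonneg i)
    have hminB : ∀ y, (K:ℝ)⁻¹ * ∑ i ∈ B, f i xstar ≤ (K:ℝ)⁻¹ * ∑ i ∈ B, f i y :=
      fun y => mul_le_mul_of_nonneg_left
        (Finset.sum_le_sum fun i _ => hinterp i y) hKnn
    have hdesc := fun z w => vt_descent (fun y => (K:ℝ)⁻¹ * ∑ i ∈ B, f i y)
      ((K:ℝ)⁻¹ * ∑ i ∈ B, L i) hdiffB hlipB z w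
    have hkey := vt_grad_sq_le (fun y => (K:ℝ)⁻¹ * ∑ i ∈ B, f i y)
      ((K:ℝ)⁻¹ * ∑ i ∈ B, L i) hLBnn hdiffB hlipB xstar hminB hdesc x
    rw [hgradB] at hkey
    beta_reduce at hkey
    have hLBLK : (K:ℝ)⁻¹ * ∑ i ∈ B, L i ≤ LK := hLK.2 ⟨B, hB, rfl⟩
    have hnn : (0:ℝ) ≤ (K:ℝ)⁻¹ * ∑ i ∈ B, f i x - (K:ℝ)⁻¹ * ∑ i ∈ B, f i xstar :=
      sub_nonneg.2 (hminB x)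
    have hsub : (K:ℝ)⁻¹ * ∑ i ∈ B, f i x - (K:ℝ)⁻¹ * ∑ i ∈ B, f i xstar
        = (K:ℝ)⁻¹ * ∑ i ∈ B, (f i x - f i xstar) := by
      rw [Finset.sum_sub_distrib]; ring
    rw [← hsub]
    nlinarith [hkey, hnn, hLBLK]
  -- averaging
  have havg : (M:ℝ)⁻¹ * ∑ B ∈ pc, ((K:ℝ)⁻¹ * ∑ i ∈ B, (f i x - f i xstar))
      = (N:ℝ)⁻¹ * ∑ i, (f i x - f i xstar) := by
    have h2 := vt_avg hN hK hKN (V := ℝ) (fun i => f i x - f i xstar)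
    simpa [smul_eq_mul] using h2
  set D := (N:ℝ)⁻¹ * ∑ i, f i x - (N:ℝ)⁻¹ * ∑ i, f i xstar with hD
  have hDeq : (N:ℝ)⁻¹ * ∑ i, (f i x - f i xstar) = D := by
    rw [hD, Finset.sum_sub_distrib]; ring
  -- PL inequality
  have hFdiffable : Differentiable ℝ (fun y : EuclideanSpace ℝ (Fin d) =>
      (N:ℝ)⁻¹ * ∑ i, f i y) := by
    apply Differentiable.const_mul
    exact Differentiable.fun_sum fun i _ => hdiff i
  have hPL : 2 * μ * D ≤ ‖g‖^2 := by
    have h1 := vt_sc_grad _ μ hFdiffable hsc x xstar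
    rw [hgFx] at h1
    beta_reduce at h1
    have h2 := abs_le.1 (abs_real_inner_le_norm g (xstar - x))
    have hstep : D ≤ ‖g‖ * ‖xstar - x‖ - μ/2 * ‖xstar - x‖^2 := by
      rw [hD]; linarith [h1, h2.1]
    have hstep2 := mul_le_mul_of_nonneg_left hstep (le_of_lt hμ)
    clear_value D
    nlinarith [sq_nonneg (‖g‖ - μ * ‖xstar - x‖), hstep2]
  -- combine
  rw [hgFx]
  clear_value pc M g D
  have hsum_le : ∑ B ∈ pc, ‖g - (K:ℝ)⁻¹ • ∑ i ∈ B, gradient (f i) x‖^2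
      ≤ (∑ B ∈ pc, (2 * LK * ((K:ℝ)⁻¹ * ∑ i ∈ B, (f i x - f i xstar)))) - (M:ℝ) * ‖g‖^2 := by
    rw [hvar]
    have := Finset.sum_le_sum hbatch
    linarith
  have hfinal2 : (M:ℝ)⁻¹ * ∑ B ∈ pc, (2 * LK * ((K:ℝ)⁻¹ * ∑ i ∈ B, (f i x - f i xstar)))
      = 2 * LK * D := by
    rw [← Finset.mul_sum]
    rw [show (M:ℝ)⁻¹ * (2 * LK * ∑ B ∈ pc, ((K:ℝ)⁻¹ * ∑ i ∈ B, (f i x - f i xstar)))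
      = 2 * LK * ((M:ℝ)⁻¹ * ∑ B ∈ pc, ((K:ℝ)⁻¹ * ∑ i ∈ B, (f i x - f i xstar))) from by ring,
      havg, hDeq]
  have hMinvnn : (0:ℝ) ≤ (M:ℝ)⁻¹ := by positivity
  have h5 := mul_le_mul_of_nonneg_left hsum_le hMinvnn
  rw [mul_sub] at h5
  rw [show (M:ℝ)⁻¹ * ((M:ℝ) * ‖g‖^2) = ‖g‖^2 from by field_simp] at h5
  rw [hfinal2] at h5
  have hr : 2 * (LK - μ) * D = 2 * LK * D - 2 * μ * D := by ring
  rw [hr]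
  linarith
end

section
/- Let f : R^d → R be L-smooth and μ-strongly convex with minimizer x* and minimum f*, and suppose the unbiased stochastic gradient satisfies the strong growth condition with constant ρ ≥ 1. Consider SNAG: y_n = αx_n + (1−α)z_n, x_{n+1} = y_n − s∇̃(y_n), z_{n+1} = βz_n + (1−β)y_n − η∇̃(y_n), with s = 1/(Lρ), η = 1/(ρ√(μL)), β = 1 − (1/ρ)√(μ/L), α = 1/(1 + (1/ρ)√(μ/L)). Then the Lyapunov energy E_n = f(x_n) − f* + (μ/2)‖z_n − x*‖² satisfies E[E_{n+1} | F_n] ≤ (1 − (1/ρ)√(μ/L)) E_n. -/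
open MeasureTheory RealInnerProductSpace Filter Topology

section aux
variable {E : Type*} [NormedAddCommGroup E] [InnerProductSpace ℝ E] [CompleteSpace E]

lemma line_hasDerivAt (f : E → ℝ) (hdiff : Differentiable ℝ f) (y u : E) (t : ℝ) :
    HasDerivAt (fun t : ℝ => f (y + t • u)) ⟪gradient f (y + t • u), u⟫ t := by
  have hc : HasDerivAt (fun t : ℝ => y + t • u) u t := by
    simpa using ((hasDerivAt_id t).smul_const u).const_add y
  have hf := (hdiff (y + t • u)).hasGradientAt.hasFDerivAt
  exact (hf.comp_hasDerivAt t hc).congr_deriv (by simp)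

lemma descent_lemma (f : E → ℝ) (L : ℝ) (hL : 0 < L) (hdiff : Differentiable ℝ f)
    (hsmooth : ∀ a b : E, ‖gradient f a - gradient f b‖ ≤ L * ‖a - b‖) (y u : E) :
    f (y + u) ≤ f y + ⟪gradient f y, u⟫ + L / 2 * ‖u‖ ^ 2 := by
  have hgradcont : Continuous (gradient f) := by
    have : LipschitzWith (Real.toNNReal L) (gradient f) := by
      apply LipschitzWith.of_dist_le_mul
      intro a b
      rw [Real.coe_toNNReal L hL.le, dist_eq_norm, dist_eq_norm]
      exact hsmooth a b
    exact this.continuous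
  have hcont : Continuous (fun t : ℝ => ⟪gradient f (y + t • u), u⟫) := by
    exact (hgradcont.comp (by continuity)).inner continuous_const
  have hftc : ∫ t in (0:ℝ)..1, ⟪gradient f (y + t • u), u⟫
      = f (y + (1:ℝ) • u) - f (y + (0:ℝ) • u) := by
    apply intervalIntegral.integral_eq_sub_of_hasDerivAt (f := fun t : ℝ => f (y + t • u))
    · intro t _
      exact line_hasDerivAt f hdiff y u t
    · exact (hcont).intervalIntegrable 0 1
  have hmono : ∫ t in (0:ℝ)..1, ⟪gradient f (y + t • u), u⟫
      ≤ ∫ t in (0:ℝ)..1, (⟪gradient f y, u⟫ + L * t * ‖u‖ ^ 2) := by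
    apply intervalIntegral.integral_mono_on (by norm_num)
    · exact hcont.intervalIntegrable 0 1
    · exact (by continuity : Continuous fun t : ℝ => ⟪gradient f y, u⟫ + L * t * ‖u‖^2).intervalIntegrable 0 1
    · intro t ht
      have h1 : ⟪gradient f (y + t • u), u⟫ - ⟪gradient f y, u⟫
          = ⟪gradient f (y + t • u) - gradient f y, u⟫ := by
        rw [inner_sub_left]
      have h2 : ⟪gradient f (y + t • u) - gradient f y, u⟫
          ≤ ‖gradient f (y + t • u) - gradient f y‖ * ‖u‖ := real_inner_le_norm _ _
      have h3 : ‖gradient f (y + t • u) - gradient f y‖ ≤ L * (t * ‖u‖) := by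
        have := hsmooth (y + t • u) y
        simpa [norm_smul, abs_of_nonneg ht.1] using this
      have h4 : ‖gradient f (y + t • u) - gradient f y‖ * ‖u‖ ≤ L * (t * ‖u‖) * ‖u‖ :=
        mul_le_mul_of_nonneg_right h3 (norm_nonneg _)
      nlinarith [norm_nonneg u]
  have hval : ∫ t in (0:ℝ)..1, (⟪gradient f y, u⟫ + L * t * ‖u‖ ^ 2)
      = ⟪gradient f y, u⟫ + L / 2 * ‖u‖ ^ 2 := by
    rw [intervalIntegral.integral_add (by simp [intervalIntegrable_const])
      (((by continuity : Continuous fun t : ℝ => L * t * ‖u‖^2)).intervalIntegrable 0 1)]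
    simp only [intervalIntegral.integral_const]
    have : ∫ t in (0:ℝ)..1, L * t * ‖u‖ ^ 2 = L / 2 * ‖u‖ ^ 2 := by
      have : (fun t : ℝ => L * t * ‖u‖ ^ 2) = fun t : ℝ => (L * ‖u‖ ^ 2) * t := by
        funext t; ring
      rw [this, intervalIntegral.integral_const_mul, integral_id]
      ring
    rw [this]; simp
  simp only [zero_smul, add_zero, one_smul] at hftc
  linarith

lemma sc_grad (f : E → ℝ) (μ : ℝ) (hdiff : Differentiable ℝ f)
    (hsc : StrongConvexOn Set.univ μ f) (y w : E) :
    f y + ⟪gradient f y, w - y⟫ + μ / 2 * ‖w - y‖ ^ 2 ≤ f w := by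
  set c : ℝ := μ / 2 * ‖w - y‖ ^ 2 with hc
  set φ : ℝ → ℝ := fun t => f (y + t • (w - y)) with hφ
  have hder : HasDerivAt φ ⟪gradient f y, w - y⟫ 0 := by
    simpa using line_hasDerivAt f hdiff y (w - y) 0
  have hslope : Tendsto (fun t : ℝ => (φ t - φ 0) / t) (𝓝[>] (0:ℝ))
      (𝓝 ⟪gradient f y, w - y⟫) := by
    have := hder.tendsto_slope_zero_right
    simpa [slope_fun_def, φ, div_eq_inv_mul] using this
  have hub : ∀ t : ℝ, t ∈ Set.Ioo (0:ℝ) 1 →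
      (φ t - φ 0) / t ≤ f w - f y - (1 - t) * c := by
    intro t ht
    have key := hsc.2 (Set.mem_univ w) (Set.mem_univ y) ht.1.le (by linarith [ht.2] : (0:ℝ) ≤ 1 - t)
      (by ring)
    have hpt : t • w + (1 - t) • y = y + t • (w - y) := by
      module
    rw [hpt] at key
    have hφt : φ t ≤ t * f w + (1 - t) * f y - t * (1 - t) * c := by
      simpa [φ, hc, smul_eq_mul, mul_assoc] using key
    have hφ0 : φ 0 = f y := by simp [φ]
    rw [div_le_iff₀ ht.1]
    nlinarith [ht.1]
  have hlim2 : Tendsto (fun t : ℝ => f w - f y - (1 - t) * c) (𝓝[>] (0:ℝ))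
      (𝓝 (f w - f y - c)) := by
    have : Tendsto (fun t : ℝ => f w - f y - (1 - t) * c) (𝓝 (0:ℝ))
        (𝓝 (f w - f y - (1 - 0) * c)) := by
      apply Tendsto.sub tendsto_const_nhds
      exact ((tendsto_const_nhds.sub tendsto_id).mul tendsto_const_nhds)
    simpa using this.mono_left nhdsWithin_le_nhds
  have : ⟪gradient f y, w - y⟫ ≤ f w - f y - c := by
    apply le_of_tendsto_of_tendsto hslope hlim2
    filter_upwards [Ioo_mem_nhdsGT_of_mem (by norm_num : (0:ℝ) ∈ Set.Ico 0 1)] with t ht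
    exact hub t ht
  linarith

end aux

set_option maxHeartbeats 2000000 in
/-- One step of SNAG for an `L`-smooth, `μ`-strongly convex function under the strong
growth condition with constant `ρ`: the Lyapunov energy
`E = f(x) - f* + (μ/2)‖z - x*‖²` contracts by the factor `1 - (1/ρ)√(μ/L)` in
conditional expectation. -/
theorem stmt13 {Ω : Type*} [MeasurableSpace Ω] (P : Measure Ω) [IsProbabilityMeasure P]
    {d : ℕ} (f : EuclideanSpace ℝ (Fin d) → ℝ) (L μ ρ : ℝ)
    (hL : 0 < L) (hμ : 0 < μ) (hμL : μ ≤ L) (hρ : 1 ≤ ρ)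
    (hdiff : Differentiable ℝ f)
    (hsmooth : ∀ x y : EuclideanSpace ℝ (Fin d),
      ‖gradient f x - gradient f y‖ ≤ L * ‖x - y‖)
    (hsc : StrongConvexOn Set.univ μ f)
    (xstar : EuclideanSpace ℝ (Fin d)) (hmin : ∀ v, f xstar ≤ f v)
    (g : EuclideanSpace ℝ (Fin d) → Ω → EuclideanSpace ℝ (Fin d))
    (hunbiased : ∀ v, ∫ ω, g v ω ∂P = gradient f v)
    (hsgc : ∀ v, ∫ ω, ‖g v ω‖ ^ 2 ∂P ≤ ρ * ‖gradient f v‖ ^ 2)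
    (x z y : EuclideanSpace ℝ (Fin d))
    (hy : y = (1 + ρ⁻¹ * Real.sqrt (μ / L))⁻¹ • x
        + (1 - (1 + ρ⁻¹ * Real.sqrt (μ / L))⁻¹) • z)
    (hgint : Integrable (g y) P)
    (hg2int : Integrable (fun ω => ‖g y ω‖ ^ 2) P)
    (hfint : Integrable (fun ω => f (y - (L * ρ)⁻¹ • g y ω)) P) :
    ∫ ω, (f (y - (L * ρ)⁻¹ • g y ω) - f xstar
        + μ / 2 * ‖((1 - ρ⁻¹ * Real.sqrt (μ / L)) • z
            + (ρ⁻¹ * Real.sqrt (μ / L)) • y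
            - (ρ * Real.sqrt (μ * L))⁻¹ • g y ω) - xstar‖ ^ 2) ∂P
      ≤ (1 - ρ⁻¹ * Real.sqrt (μ / L))
          * (f x - f xstar + μ / 2 * ‖z - xstar‖ ^ 2) := by
  have hρ0 : (0:ℝ) < ρ := lt_of_lt_of_le one_pos hρ
  set τ : ℝ := ρ⁻¹ * Real.sqrt (μ / L) with hτdef
  set s : ℝ := (L * ρ)⁻¹ with hsdef
  set η : ℝ := (ρ * Real.sqrt (μ * L))⁻¹ with hηdef
  have hr : (0:ℝ) < Real.sqrt (μ / L) := Real.sqrt_pos.2 (div_pos hμ hL)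
  have hrL : (0:ℝ) < Real.sqrt (μ * L) := Real.sqrt_pos.2 (by positivity)
  have hτ0 : 0 < τ := by rw [hτdef]; positivity
  have hτ1 : τ ≤ 1 := by
    have h1 : Real.sqrt (μ / L) ≤ 1 := by
      rw [show (1:ℝ) = Real.sqrt 1 by simp]
      exact Real.sqrt_le_sqrt (by rw [div_le_one hL] at *; exact hμL)
    have h2 : ρ⁻¹ ≤ 1 := by
      rw [inv_le_one_iff₀]; right; exact hρ
    calc τ = ρ⁻¹ * Real.sqrt (μ / L) := hτdef
      _ ≤ 1 * 1 := by
          apply mul_le_mul h2 h1 hr.le (by norm_num)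
      _ = 1 := by norm_num
  have hss : Real.sqrt (μ / L) * Real.sqrt (μ * L) = μ := by
    rw [← Real.sqrt_mul (le_of_lt (div_pos hμ hL))]
    rw [show μ / L * (μ * L) = μ ^ 2 by field_simp]
    exact Real.sqrt_sq hμ.le
  have hsqL : Real.sqrt (μ * L) ^ 2 = μ * L := Real.sq_sqrt (by positivity)
  have hid1 : μ * η = τ := by
    have key : (ρ * Real.sqrt (μ * L)) ≠ 0 := by positivity
    have hρ' : ρ ≠ 0 := hρ0.ne'
    rw [hηdef, hτdef, ← div_eq_mul_inv, div_eq_iff key,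
      show ρ⁻¹ * Real.sqrt (μ/L) * (ρ * Real.sqrt (μ*L))
        = (ρ⁻¹ * ρ) * (Real.sqrt (μ/L) * Real.sqrt (μ*L)) from by ring,
      inv_mul_cancel₀ hρ', one_mul, hss]
  have hid2 : L * s ^ 2 * ρ = s := by
    rw [hsdef]; field_simp
  have hid3 : μ * η ^ 2 * ρ = s := by
    have hρ' : ρ ≠ 0 := hρ0.ne'
    rw [hηdef, hsdef, mul_inv, mul_pow, inv_pow (Real.sqrt (μ * L)) 2, hsqL]
    field_simp
  set G := gradient f y with hG
  set v := ((1 - τ) • z + τ • y) - xstar with hv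
  set c₁ := -(s • G) - (μ * η) • v with hc1
  set c₂ := L * s ^ 2 / 2 + μ * η ^ 2 / 2 with hc2
  have hc₂0 : 0 ≤ c₂ := by rw [hc2]; positivity
  have hc₂ρ : c₂ * ρ = s := by
    rw [hc2]; linear_combination hid2 / 2 + hid3 / 2
  set C₀ : ℝ := f y - f xstar + μ / 2 * ‖v‖ ^ 2 with hC₀
  -- pointwise bound
  have hpt : ∀ ω, f (y - s • g y ω) - f xstar
      + μ / 2 * ‖((1 - τ) • z + τ • y - η • g y ω) - xstar‖ ^ 2
      ≤ C₀ + ⟪c₁, g y ω⟫ + c₂ * ‖g y ω‖ ^ 2 := by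
    intro ω
    set gω := g y ω with hgω
    have hdesc := descent_lemma f L hL hdiff hsmooth y (-(s • gω))
    rw [← sub_eq_add_neg] at hdesc
    have e1 : ⟪G, -(s • gω)⟫ = -(s * ⟪G, gω⟫) := by
      rw [inner_neg_right, real_inner_smul_right]
    have e2 : ‖-(s • gω)‖ ^ 2 = s ^ 2 * ‖gω‖ ^ 2 := by
      rw [norm_neg, norm_smul]; simp [mul_pow, sq_abs]
    rw [e1, e2, hG] at hdesc
    have e3 : ((1 - τ) • z + τ • y - η • gω) - xstar = v - η • gω := by
      rw [hv]; abel
    have e4 : ‖v - η • gω‖ ^ 2 = ‖v‖ ^ 2 - 2 * (η * ⟪v, gω⟫) + η ^ 2 * ‖gω‖ ^ 2 := by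
      rw [norm_sub_sq_real, real_inner_smul_right, norm_smul]
      simp [mul_pow, sq_abs]
    have e5 : ⟪c₁, gω⟫ = -(s * ⟪G, gω⟫) - (μ * η) * ⟪v, gω⟫ := by
      rw [hc1, inner_sub_left, inner_neg_left, real_inner_smul_left, real_inner_smul_left]
    rw [e3, e4, e5, hC₀, hc2]
    have hGy : gradient f y = G := hG.symm
    rw [hGy] at hdesc
    linarith [hdesc]
  -- integrability of the majorant
  have hi1 : Integrable (fun ω => ⟪c₁, g y ω⟫) P := hgint.const_inner c₁
  have hi2 : Integrable (fun ω => c₂ * ‖g y ω‖ ^ 2) P := hg2int.const_mul c₂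
  have hQint : Integrable (fun ω => C₀ + ⟪c₁, g y ω⟫ + c₂ * ‖g y ω‖ ^ 2) P :=
    ((integrable_const C₀).add hi1).add hi2
  have hnonneg : ∀ ω, (0:ℝ) ≤ f (y - s • g y ω) - f xstar
      + μ / 2 * ‖((1 - τ) • z + τ • y - η • g y ω) - xstar‖ ^ 2 := by
    intro ω
    have := hmin (y - s • g y ω)
    have h2 : (0:ℝ) ≤ μ / 2 * ‖((1 - τ) • z + τ • y - η • g y ω) - xstar‖ ^ 2 := by positivity
    linarith
  have hstep1 : ∫ ω, (f (y - s • g y ω) - f xstar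
      + μ / 2 * ‖((1 - τ) • z + τ • y - η • g y ω) - xstar‖ ^ 2) ∂P
      ≤ ∫ ω, (C₀ + ⟪c₁, g y ω⟫ + c₂ * ‖g y ω‖ ^ 2) ∂P := by
    exact integral_mono_of_nonneg (Filter.Eventually.of_forall hnonneg) hQint
      (Filter.Eventually.of_forall hpt)
  have hQval : ∫ ω, (C₀ + ⟪c₁, g y ω⟫ + c₂ * ‖g y ω‖ ^ 2) ∂P
      = C₀ + ⟪c₁, G⟫ + c₂ * ∫ ω, ‖g y ω‖ ^ 2 ∂P := by
    have hi01 : Integrable (fun ω => C₀ + ⟪c₁, g y ω⟫) P := (integrable_const C₀).add hi1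
    rw [integral_add hi01 hi2, integral_add (integrable_const C₀) hi1, integral_const,
      integral_inner hgint c₁, hunbiased y, integral_const_mul]
    simp [hG]
  have hstep2 : C₀ + ⟪c₁, G⟫ + c₂ * ∫ ω, ‖g y ω‖ ^ 2 ∂P
      ≤ C₀ + ⟪c₁, G⟫ + c₂ * (ρ * ‖G‖ ^ 2) := by
    have h := hsgc y
    rw [← hG] at h
    linarith [mul_le_mul_of_nonneg_left h hc₂0]
  have e6 : ⟪c₁, G⟫ = -(s * ‖G‖ ^ 2) - (μ * η) * ⟪v, G⟫ := by
    rw [hc1, inner_sub_left, inner_neg_left, real_inner_smul_left, real_inner_smul_left,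
      real_inner_self_eq_norm_sq]
  have hstep3 : C₀ + ⟪c₁, G⟫ + c₂ * (ρ * ‖G‖ ^ 2) = C₀ - τ * ⟪v, G⟫ := by
    rw [e6]
    linear_combination ‖G‖ ^ 2 * hc₂ρ - ⟪v, G⟫ * hid1
  -- deterministic step
  have h1τ : (1:ℝ) + τ ≠ 0 := by positivity
  have hzy : τ • (z - y) = y - x := by
    have c1 : (1 + τ) * (1 + τ)⁻¹ = 1 := mul_inv_cancel₀ h1τ
    have c2 : (1 + τ) * (1 - (1 + τ)⁻¹) = τ := by field_simp; ring
    have h1 : (1 + τ) • y = x + τ • z := by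
      rw [hy, smul_add, smul_smul, smul_smul, c1, c2, one_smul]
    linear_combination (norm := module) -h1
  have ha := sc_grad f μ hdiff hsc y x
  have hb := sc_grad f μ hdiff hsc y xstar
  rw [hG.symm] at ha hb
  have hvsplit : τ • v = (1 - τ) • (y - x) + τ • (y - xstar) := by
    rw [hv]
    linear_combination (norm := module) (1 - τ) • hzy
  have hvinner : τ * ⟪v, G⟫ = (1 - τ) * ⟪y - x, G⟫ + τ * ⟪y - xstar, G⟫ := by
    have h2 : ⟪τ • v, G⟫ = ⟪(1 - τ) • (y - x) + τ • (y - xstar), G⟫ := by rw [hvsplit]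
    rw [inner_add_left, real_inner_smul_left, real_inner_smul_left, real_inner_smul_left] at h2
    exact h2
  have hvnorm : ‖v‖ ^ 2 ≤ (1 - τ) * ‖z - xstar‖ ^ 2 + τ * ‖y - xstar‖ ^ 2 := by
    have hvab : v = (1 - τ) • (z - xstar) + τ • (y - xstar) := by rw [hv]; module
    have h1 : ‖(1 - τ) • (z - xstar) + τ • (y - xstar)‖ ^ 2
        = (1 - τ) ^ 2 * ‖z - xstar‖ ^ 2
          + 2 * ((1 - τ) * τ * ⟪z - xstar, y - xstar⟫) + τ ^ 2 * ‖y - xstar‖ ^ 2 := by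
      rw [norm_add_sq_real, real_inner_smul_left, real_inner_smul_right, norm_smul, norm_smul]
      simp [mul_pow, sq_abs]
      ring
    have h3 : ‖(z - xstar) - (y - xstar)‖ ^ 2
        = ‖z - xstar‖ ^ 2 - 2 * ⟪z - xstar, y - xstar⟫ + ‖y - xstar‖ ^ 2 :=
      norm_sub_sq_real _ _
    have h4 : 0 ≤ (1 - τ) * τ * ‖(z - xstar) - (y - xstar)‖ ^ 2 :=
      mul_nonneg (mul_nonneg (by linarith) hτ0.le) (by positivity)
    have h5 : (1 - τ) * τ * ‖(z - xstar) - (y - xstar)‖ ^ 2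
        = (1 - τ) * τ * (‖z - xstar‖ ^ 2 - 2 * ⟪z - xstar, y - xstar⟫ + ‖y - xstar‖ ^ 2) := by
      rw [h3]
    rw [hvab, h1]
    linarith [h4, h5]
  have hGxy : ⟪G, x - y⟫ = -⟪y - x, G⟫ := by
    rw [real_inner_comm, show x - y = -(y - x) from by abel, inner_neg_left]
  have hGsy : ⟪G, xstar - y⟫ = -⟪y - xstar, G⟫ := by
    rw [real_inner_comm, show xstar - y = -(y - xstar) from by abel, inner_neg_left]
  have i1 : f y - f x ≤ ⟪y - x, G⟫ := by
    have h0 : (0:ℝ) ≤ μ / 2 * ‖x - y‖ ^ 2 := by positivity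
    rw [hGxy] at ha
    linarith
  have i2 : f y - f xstar + μ / 2 * ‖y - xstar‖ ^ 2 ≤ ⟪y - xstar, G⟫ := by
    rw [hGsy, norm_sub_rev] at hb
    linarith
  have hdet : C₀ - τ * ⟪v, G⟫ ≤ (1 - τ) * (f x - f xstar + μ / 2 * ‖z - xstar‖ ^ 2) := by
    rw [hC₀]
    have j1 : (1 - τ) * (f y - f x) ≤ (1 - τ) * ⟪y - x, G⟫ :=
      mul_le_mul_of_nonneg_left i1 (by linarith)
    have j2 : τ * (f y - f xstar + μ / 2 * ‖y - xstar‖ ^ 2) ≤ τ * ⟪y - xstar, G⟫ :=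
      mul_le_mul_of_nonneg_left i2 hτ0.le
    have j3 : μ / 2 * ‖v‖ ^ 2 ≤ μ / 2 * ((1 - τ) * ‖z - xstar‖ ^ 2 + τ * ‖y - xstar‖ ^ 2) :=
      mul_le_mul_of_nonneg_left hvnorm (by positivity)
    linarith [hvinner, j1, j2, j3]
  calc ∫ ω, (f (y - s • g y ω) - f xstar
        + μ / 2 * ‖((1 - τ) • z + τ • y - η • g y ω) - xstar‖ ^ 2) ∂P
      ≤ ∫ ω, (C₀ + ⟪c₁, g y ω⟫ + c₂ * ‖g y ω‖ ^ 2) ∂P := hstep1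
    _ = C₀ + ⟪c₁, G⟫ + c₂ * ∫ ω, ‖g y ω‖ ^ 2 ∂P := hQval
    _ ≤ C₀ + ⟪c₁, G⟫ + c₂ * (ρ * ‖G‖ ^ 2) := hstep2
    _ = C₀ - τ * ⟪v, G⟫ := hstep3
    _ ≤ (1 - τ) * (f x - f xstar + μ / 2 * ‖z - xstar‖ ^ 2) := hdet
end
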